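/- arXiv:1910.14445 — 4 statements merged into one kernel-verified Lean document; each statement's English description precedes it below -/
import Mathlib

section
/- Let n ≥ 2 and let (v, w) and (v′, w′) be two orthonormal pairs of vectors in ℝⁿ. Then the points [v + iw] and [v′ + iw′] of the complex projective space ℙ(ℂⁿ) coincide if and only if there exists θ ∈ ℝ such that v′ = cos θ · v − sin θ · w and w′ = sin θ · v + cos θ · w. In particular, if [v + iw] = [v′ + iw′] then span{v′, w′} = span{v, w}. -/
/-- Two orthonormal pairs `(v,w)` and `(v',w')` in `ℝⁿ` determine
the same point `[v + i w] = [v' + i w']` of complex projective space `ℙ(ℂⁿ)`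
iff `(v',w')` is obtained from `(v,w)` by a rotation of angle `θ` in their common
plane; in particular equality of the projective points forces
`span{v',w'} = span{v,w}`. -/
theorem stmt_1 (n : ℕ) (hn : 2 ≤ n) (v w v' w' : EuclideanSpace ℝ (Fin n))
    (hvw : inner ℝ v w = (0 : ℝ)) (hv : ‖v‖ = 1) (hw : ‖w‖ = 1)
    (hvw' : inner ℝ v' w' = (0 : ℝ)) (hv' : ‖v'‖ = 1) (hw' : ‖w'‖ = 1)
    (z z' : Fin n → ℂ)
    (hz : ∀ j, z j = (v j : ℂ) + Complex.I * (w j : ℂ))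
    (hz' : ∀ j, z' j = (v' j : ℂ) + Complex.I * (w' j : ℂ))
    (hz0 : z ≠ 0) (hz'0 : z' ≠ 0) :
    (Projectivization.mk ℂ z hz0 = Projectivization.mk ℂ z' hz'0 ↔
      ∃ θ : ℝ, v' = Real.cos θ • v - Real.sin θ • w ∧
               w' = Real.sin θ • v + Real.cos θ • w) ∧
    (Projectivization.mk ℂ z hz0 = Projectivization.mk ℂ z' hz'0 →
      Submodule.span ℝ {v', w'} = Submodule.span ℝ {v, w}) := by
  have key : (Projectivization.mk ℂ z hz0 = Projectivization.mk ℂ z' hz'0 ↔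
      ∃ θ : ℝ, v' = Real.cos θ • v - Real.sin θ • w ∧
               w' = Real.sin θ • v + Real.cos θ • w) := by
    rw [Projectivization.mk_eq_mk_iff]
    constructor
    · rintro ⟨a, ha⟩
      set p : ℝ := (a : ℂ).re with hp
      set q : ℝ := (a : ℂ).im with hq
      have h1 : ∀ j, v j = p * v' j - q * w' j := by
        intro j
        have h := congrFun ha j
        simp only [Pi.smul_apply, Units.smul_def, smul_eq_mul, hz, hz'] at h
        have := congrArg Complex.re h
        simpa [Complex.mul_re, Complex.add_re, Complex.add_im, hp, hq] using this.symm
      have h2 : ∀ j, w j = q * v' j + p * w' j := by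
        intro j
        have h := congrFun ha j
        simp only [Pi.smul_apply, Units.smul_def, smul_eq_mul, hz, hz'] at h
        have := congrArg Complex.im h
        simp only [Complex.mul_im, Complex.add_re, Complex.add_im, Complex.mul_re,
          Complex.I_re, Complex.I_im, Complex.ofReal_re, Complex.ofReal_im] at this
        rw [← hp, ← hq] at this
        linarith
      have hvv : v = p • v' - q • w' := by
        ext j
        simpa using h1 j
      have hiv' : (inner ℝ v' v' : ℝ) = 1 := by
        rw [real_inner_self_eq_norm_mul_norm, hv']; ring
      have hiw' : (inner ℝ w' w' : ℝ) = 1 := by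
        rw [real_inner_self_eq_norm_mul_norm, hw']; ring
      have hwv' : (inner ℝ w' v' : ℝ) = 0 := by rw [real_inner_comm]; exact hvw'
      have hnorm : p ^ 2 + q ^ 2 = 1 := by
        have hiv : (inner ℝ v v : ℝ) = 1 := by
          rw [real_inner_self_eq_norm_mul_norm, hv]; ring
        rw [hvv] at hiv
        simp only [inner_sub_left, inner_sub_right, real_inner_smul_left,
          real_inner_smul_right, hvw', hwv', hiv', hiw'] at hiv
        nlinarith [hiv]
      -- the conjugate of a
      set u : ℂ := ⟨p, -q⟩ with hu
      have hu0 : u ≠ 0 := by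
        intro h
        rw [Complex.ext_iff] at h
        simp [hu] at h
        nlinarith [h.1, h.2]
      have habs : ‖u‖ = 1 := by
        rw [Complex.norm_def, Complex.normSq_mk]
        nlinarith [Real.sqrt_eq_one.2 (by nlinarith : p * p + -q * -q = 1)]
      refine ⟨Complex.arg u, ?_, ?_⟩
      · have hc : Real.cos (Complex.arg u) = p := by
          rw [Complex.cos_arg hu0, habs]; simp [hu]
        have hs : Real.sin (Complex.arg u) = -q := by
          rw [Complex.sin_arg, habs]; simp [hu]
        ext j
        simp only [PiLp.sub_apply, PiLp.smul_apply, smul_eq_mul, hc, hs]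
        linear_combination (-p) * h1 j + (-q) * h2 j + (-(v' j)) * hnorm
      · have hc : Real.cos (Complex.arg u) = p := by
          rw [Complex.cos_arg hu0, habs]; simp [hu]
        have hs : Real.sin (Complex.arg u) = -q := by
          rw [Complex.sin_arg, habs]; simp [hu]
        ext j
        simp only [PiLp.add_apply, PiLp.smul_apply, smul_eq_mul, hc, hs]
        linear_combination q * h1 j + (-p) * h2 j + (-(w' j)) * hnorm
    · rintro ⟨θ, hv'', hw''⟩
      refine ⟨Units.mk0 (Complex.exp (-(θ : ℂ) * Complex.I)) (Complex.exp_ne_zero _), ?_⟩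
      have he : Complex.exp ((θ : ℂ) * Complex.I)
          = (Real.cos θ : ℂ) + (Real.sin θ : ℂ) * Complex.I := by
        rw [Complex.exp_mul_I, Complex.ofReal_cos, Complex.ofReal_sin]
      have hee : Complex.exp (-(θ : ℂ) * Complex.I) * Complex.exp ((θ : ℂ) * Complex.I) = 1 := by
        rw [← Complex.exp_add]
        ring_nf
        exact Complex.exp_zero
      funext j
      have hfac : z' j = Complex.exp ((θ : ℂ) * Complex.I) * z j := by
        rw [hz', hz, he, hv'', hw'']
        simp only [PiLp.sub_apply, PiLp.add_apply, PiLp.smul_apply, smul_eq_mul]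
        push_cast
        linear_combination (-(Complex.sin (θ : ℂ)) * ((w j : ℝ) : ℂ)) * Complex.I_sq
      show (Complex.exp (-(θ : ℂ) * Complex.I)) * z' j = z j
      rw [hfac, ← mul_assoc, hee, one_mul]
  refine ⟨key, fun h => ?_⟩
  obtain ⟨θ, h1, h2⟩ := key.1 h
  have pyth : Real.sin θ ^ 2 + Real.cos θ ^ 2 = 1 := Real.sin_sq_add_cos_sq θ
  apply le_antisymm
  · rw [Submodule.span_le]
    rintro x (rfl | rfl)
    · rw [h1]
      exact sub_mem
        (Submodule.smul_mem _ _ (Submodule.subset_span (Set.mem_insert _ _)))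
        (Submodule.smul_mem _ _ (Submodule.subset_span (Set.mem_insert_of_mem _ rfl)))
    · rw [h2]
      exact add_mem
        (Submodule.smul_mem _ _ (Submodule.subset_span (Set.mem_insert _ _)))
        (Submodule.smul_mem _ _ (Submodule.subset_span (Set.mem_insert_of_mem _ rfl)))
  · rw [Submodule.span_le]
    have hv0 : v = Real.cos θ • v' + Real.sin θ • w' := by
      ext j
      rw [h1, h2]
      simp only [PiLp.sub_apply, PiLp.add_apply, PiLp.smul_apply, smul_eq_mul]
      linear_combination (-(v j)) * pyth
    have hw0 : w = Real.cos θ • w' - Real.sin θ • v' := by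
      ext j
      rw [h1, h2]
      simp only [PiLp.sub_apply, PiLp.add_apply, PiLp.smul_apply, smul_eq_mul]
      linear_combination (-(w j)) * pyth
    rintro x (rfl | rfl)
    · rw [hv0]
      exact add_mem
        (Submodule.smul_mem _ _ (Submodule.subset_span (Set.mem_insert _ _)))
        (Submodule.smul_mem _ _ (Submodule.subset_span (Set.mem_insert_of_mem _ rfl)))
    · rw [hw0]
      exact sub_mem
        (Submodule.smul_mem _ _ (Submodule.subset_span (Set.mem_insert_of_mem _ rfl)))
        (Submodule.smul_mem _ _ (Submodule.subset_span (Set.mem_insert _ _)))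
end

section
/- For every k ≥ 1, the subspace {ξ ∈ ℂᵏ : ∑_{j=1}^k ξ_j² ≠ 0} of ℂᵏ (with the subspace topology) is not simply connected. -/
open Complex Real unitInterval

noncomputable section StmtFourAux

/-- `arg (exp (θ * I)) = θ` for `θ ∈ (-π, π]`. -/
lemma aux_arg_exp {θ : ℝ} (hθ : θ ∈ Set.Ioc (-π) π) :
    Complex.arg (Complex.exp (θ * Complex.I)) = θ := by
  rw [Complex.arg_exp_mul_I, toIocMod_eq_self]
  simp only [Set.mem_Ioc]
  exact ⟨hθ.1, by linarith [hθ.2]⟩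

/-- A complex number close to `1` has positive real part. -/
lemma aux_re_pos {z : ℂ} (h : ‖z - 1‖ < 1) : 0 < z.re := by
  have h2 : ‖z - 1‖ ^ 2 < 1 := by
    nlinarith [norm_nonneg (z - 1)]
  rw [Complex.sq_norm, Complex.normSq_apply] at h2
  simp only [Complex.sub_re, Complex.sub_im, Complex.one_re, Complex.one_im] at h2
  nlinarith [sq_nonneg z.im, sq_nonneg (z.re - 1)]

/-- **Key lemma**: there is no homotopy (rel endpoints, both endpoint values `1`)
inside `ℂ ∖ {0}` between the loop `t ↦ exp (2πit)` and the loop `t ↦ exp (-2πit)`. -/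
lemma aux_no_homotopy (G : I × I → ℂ) (hG : Continuous G) (hne : ∀ p, G p ≠ 0)
    (h0 : ∀ t : I, G (0, t) = Complex.exp (2 * π * t * Complex.I))
    (h1 : ∀ t : I, G (1, t) = Complex.exp (-(2 * π * t) * Complex.I))
    (hs0 : ∀ s : I, G (s, 0) = 1) (hs1 : ∀ s : I, G (s, 1) = 1) : False := by
  -- a positive lower bound for `|G|`
  obtain ⟨p₀, -, hp₀⟩ := isCompact_univ.exists_isMinOn (Set.univ_nonempty)
    ((continuous_norm.comp hG).continuousOn)
  set m : ℝ := ‖G p₀‖ with hm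
  have hmpos : 0 < m := by
    have := hne p₀
    simpa [hm, norm_pos_iff] using this
  have hmle : ∀ p, m ≤ ‖G p‖ := fun p =>
    isMinOn_iff.mp hp₀ p (Set.mem_univ p)
  -- uniform continuity
  have hUC : UniformContinuous G := CompactSpace.uniformContinuous_of_continuous hG
  rw [Metric.uniformContinuous_iff] at hUC
  obtain ⟨δ, hδpos, hδ⟩ := hUC m hmpos
  -- choose a fine subdivision
  obtain ⟨n, hn⟩ := exists_nat_gt (max 2 (1 / δ))
  have hn2 : (2 : ℝ) < n := lt_of_le_of_lt (le_max_left _ _) hn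
  have hnpos : (0 : ℝ) < n := by linarith
  have hinv : 1 / (n : ℝ) < δ := by
    rw [div_lt_iff₀ hnpos]
    have h1δ : 1 / δ < n := lt_of_le_of_lt (le_max_right _ _) hn
    rw [div_lt_iff₀ hδpos] at h1δ
    linarith [mul_comm δ (n : ℝ) ▸ h1δ]
  -- subdivision points
  have hmem : ∀ j : ℕ, j ≤ n → (j : ℝ) / n ∈ Set.Icc (0 : ℝ) 1 := by
    intro j hj
    constructor
    · positivity
    · rw [div_le_one hnpos]; exact_mod_cast hj
  set pt : ℕ → I := fun j => Set.projIcc 0 1 zero_le_one ((j : ℝ) / n) with hpt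
  have hptval : ∀ j : ℕ, j ≤ n → ((pt j : ℝ)) = (j : ℝ) / n := by
    intro j hj
    simp only [hpt]
    rw [Set.projIcc_of_mem _ (hmem j hj)]
  have hpt0 : pt 0 = 0 := by
    ext; rw [hptval 0 (Nat.zero_le n)]; simp
  have hptn : pt n = 1 := by
    ext; rw [hptval n le_rfl]; field_simp; simp
  -- the ratios
  set r : I → ℕ → ℂ := fun s j => G (s, pt (j + 1)) / G (s, pt j) with hr
  have hrne : ∀ s j, r s j ≠ 0 := fun s j =>
    div_ne_zero (hne _) (hne _)
  -- fineness: each ratio has positive real part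
  have hrre : ∀ s : I, ∀ j < n, 0 < (r s j).re := by
    intro s j hj
    apply aux_re_pos
    have hd : dist ((s, pt (j + 1)) : I × I) (s, pt j) < δ := by
      rw [Prod.dist_eq]
      have hdd : dist (pt (j + 1)) (pt j) = 1 / (n : ℝ) := by
        rw [Subtype.dist_eq, hptval _ (by omega), hptval _ (by omega), Real.dist_eq]
        have heq : ((j : ℝ) + 1) / n - (j : ℝ) / n = 1 / n := by field_simp; ring
        push_cast
        rw [heq, abs_of_pos (by positivity)]
      simp only [dist_self, hdd]
      exact max_lt hδpos hinv
    have hclose := hδ hd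
    have habs : ‖G (s, pt (j + 1)) - G (s, pt j)‖ < m := by
      rwa [Complex.dist_eq] at hclose
    have hb := hne (s, pt j)
    have hbm := hmle (s, pt j)
    rw [hr]
    have : G (s, pt (j + 1)) / G (s, pt j) - 1
        = (G (s, pt (j + 1)) - G (s, pt j)) / G (s, pt j) := by
      field_simp
    rw [this, norm_div]
    rw [div_lt_one (by simpa [norm_pos_iff] using hb)]
    exact lt_of_lt_of_le habs hbm
  -- the winding functional
  set W : I → ℝ := fun s => ∑ j ∈ Finset.range n, Complex.arg (r s j) with hW
  -- continuity of W
  have hWc : Continuous W := by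
    apply continuous_finset_sum
    intro j hj
    rw [Finset.mem_range] at hj
    rw [continuous_iff_continuousAt]
    intro s
    have hrc : ContinuousAt (fun s : I => r s j) s := by
      apply ContinuousAt.div
      · exact (hG.comp (continuous_id.prodMk continuous_const)).continuousAt
      · exact (hG.comp (continuous_id.prodMk continuous_const)).continuousAt
      · exact hne _
    exact ContinuousAt.comp (x := s) (Complex.continuousAt_arg (Or.inl (hrre s j hj))) hrc
  -- telescoping: the product of the ratios is 1 when the endpoints agree
  have htel : ∀ s : I, ∀ M ≤ n, ∏ j ∈ Finset.range M, r s j = G (s, pt M) / G (s, pt 0) := by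
    intro s M
    induction M with
    | zero => intro _; simp [div_self (hne (s, pt 0))]
    | succ M ih =>
      intro hM
      have h0' := hne (s, pt 0)
      have hM' := hne (s, pt M)
      rw [Finset.prod_range_succ, ih (by omega)]
      simp only [hr]
      field_simp
      try ring
  have hprod : ∀ s : I, ∏ j ∈ Finset.range n, r s j = 1 := by
    intro s
    rw [htel s n le_rfl, hptn, hpt0, hs1, hs0, div_one]
  -- each W s is an integer multiple of 2π
  have hWint : ∀ s : I, ∃ M : ℤ, W s = M * (2 * π) := by
    intro s
    have hfact : ∀ j ∈ Finset.range n,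
        r s j = (‖r s j‖ : ℂ) * Complex.exp (Complex.arg (r s j) * Complex.I) :=
      fun j _ => (Complex.norm_mul_exp_arg_mul_I (r s j)).symm
    have h1 : (1 : ℂ) = (∏ j ∈ Finset.range n, (‖r s j‖ : ℂ)) *
        Complex.exp ((W s : ℝ) * Complex.I) := by
      rw [← hprod s, Finset.prod_congr rfl hfact, Finset.prod_mul_distrib]
      congr 1
      rw [← Complex.exp_sum]
      congr 1
      rw [hW]
      push_cast
      rw [Finset.sum_mul]
    set A : ℝ := ∏ j ∈ Finset.range n, ‖r s j‖ with hA
    have hApos : 0 < A :=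
      Finset.prod_pos fun j _ => norm_pos_iff.mpr (hrne s j)
    have hcast : (∏ j ∈ Finset.range n, (‖r s j‖ : ℂ)) = (A : ℂ) := by
      rw [hA]; push_cast; rfl
    rw [hcast] at h1
    have habs1 : ‖(A : ℂ) * Complex.exp ((W s : ℝ) * Complex.I)‖ = 1 := by
      rw [← h1]; simp
    rw [norm_mul, Complex.norm_exp_ofReal_mul_I, mul_one, Complex.norm_real, Real.norm_eq_abs,
      abs_of_pos hApos] at habs1
    rw [habs1] at h1
    push_cast at h1
    have hexp : Complex.exp ((W s : ℝ) * Complex.I) = 1 := by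
      rw [one_mul] at h1; exact h1.symm
    rw [Complex.exp_eq_one_iff] at hexp
    obtain ⟨M, hM⟩ := hexp
    refine ⟨M, ?_⟩
    have hI : ((W s : ℂ)) = (M : ℂ) * (2 * (π : ℂ)) := by
      have := hM
      field_simp at this ⊢
      have hIne : (Complex.I : ℂ) ≠ 0 := Complex.I_ne_zero
      have : (W s : ℂ) * Complex.I = ((M : ℂ) * (2 * (π : ℂ))) * Complex.I := by
        rw [hM]; ring
      exact (mul_right_cancel₀ hIne this).trans (by ring)
    exact_mod_cast hI
  -- value at s = 0
  have hr0 : ∀ j < n, r 0 j = Complex.exp ((2 * π / n : ℝ) * Complex.I) := by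
    intro j hj
    rw [hr]
    simp only
    rw [h0, h0, ← Complex.exp_sub]
    congr 1
    rw [hptval _ (by omega), hptval _ (by omega)]
    push_cast
    field_simp
    ring
  have hW0 : W 0 = 2 * π := by
    rw [hW]
    simp only
    have harg : ∀ j ∈ Finset.range n, Complex.arg (r 0 j) = 2 * π / n := by
      intro j hj
      rw [Finset.mem_range] at hj
      rw [hr0 j hj]
      apply aux_arg_exp
      constructor
      · have : 0 < 2 * π / n := by positivity
        linarith [Real.pi_pos]
      · rw [div_le_iff₀ hnpos]
        nlinarith [Real.pi_pos]
    rw [Finset.sum_congr rfl harg, Finset.sum_const, Finset.card_range, nsmul_eq_mul]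
    field_simp
  -- value at s = 1
  have hr1 : ∀ j < n, r 1 j = Complex.exp ((-(2 * π / n) : ℝ) * Complex.I) := by
    intro j hj
    rw [hr]
    simp only
    rw [h1, h1, ← Complex.exp_sub]
    congr 1
    rw [hptval _ (by omega), hptval _ (by omega)]
    push_cast
    field_simp
    ring
  have hW1 : W 1 = -(2 * π) := by
    rw [hW]
    simp only
    have harg : ∀ j ∈ Finset.range n, Complex.arg (r 1 j) = -(2 * π / n) := by
      intro j hj
      rw [Finset.mem_range] at hj
      rw [hr1 j hj]
      apply aux_arg_exp
      constructor
      · rw [neg_lt_neg_iff, div_lt_iff₀ hnpos]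
        nlinarith [Real.pi_pos]
      · have : 0 < 2 * π / n := by positivity
        linarith [Real.pi_pos]
    rw [Finset.sum_congr rfl harg, Finset.sum_const, Finset.card_range, nsmul_eq_mul]
    field_simp
  -- the image of W is preconnected and contains ±2π, hence contains π
  have hconn : IsPreconnected (W '' Set.univ) :=
    (isPreconnected_univ).image W hWc.continuousOn
  have h2π : (2 * π) ∈ W '' Set.univ := ⟨0, Set.mem_univ _, hW0⟩
  have hm2π : (-(2 * π)) ∈ W '' Set.univ := ⟨1, Set.mem_univ _, hW1⟩
  have hIcc : Set.Icc (-(2 * π)) (2 * π) ⊆ W '' Set.univ :=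
    hconn.Icc_subset hm2π h2π
  have hπmem : π ∈ W '' Set.univ := by
    apply hIcc
    constructor <;> nlinarith [Real.pi_pos]
  obtain ⟨s, -, hsval⟩ := hπmem
  obtain ⟨M, hM⟩ := hWint s
  rw [hsval] at hM
  -- π = M * 2π is impossible
  have hπne : (π : ℝ) ≠ 0 := ne_of_gt Real.pi_pos
  have : (1 : ℝ) = 2 * M := by
    have h := hM
    field_simp at h
    nlinarith [Real.pi_pos, h]
  have : (1 : ℤ) = 2 * M := by exact_mod_cast this
  omega

end StmtFourAux

set_option maxHeartbeats 1000000 in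
/-- For every `k ≥ 1`, the subspace `{ξ ∈ ℂᵏ : ∑ ξⱼ² ≠ 0}` of `ℂᵏ`
(the image of `Q_k ∖ (H ∪ H')` under the Hoffman–Osserman biholomorphism) is not
simply connected. -/
theorem stmt_4 (k : ℕ) (hk : 1 ≤ k) :
    ¬ SimplyConnectedSpace {ξ : Fin k → ℂ // (∑ j, ξ j ^ 2) ≠ 0} := by
  intro hsc
  -- embedding of ℂ into ℂᵏ on the first coordinate (made opaque)
  obtain ⟨e, he⟩ : ∃ e : ℂ → (Fin k → ℂ), e = fun z j => if j = (⟨0, hk⟩ : Fin k) then z else 0 :=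
    ⟨_, rfl⟩
  have hesum : ∀ z : ℂ, (∑ j, (e z) j ^ 2) = z ^ 2 := by
    intro z
    rw [he]
    simp only
    have h : ∀ j : Fin k, (if j = (⟨0, hk⟩ : Fin k) then z else 0) ^ 2
        = if j = (⟨0, hk⟩ : Fin k) then z ^ 2 else 0 := by
      intro j; split_ifs <;> simp
    rw [Finset.sum_congr rfl fun j _ => h j]
    simp
  have hecont : Continuous e := by
    rw [he]
    apply continuous_pi
    intro j
    by_cases h : j = (⟨0, hk⟩ : Fin k) <;> simp only [h, if_true, if_false] <;>
      first | exact continuous_id | exact continuous_const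
  -- endpoints
  have hne1 : (∑ j, (e 1) j ^ 2) ≠ 0 := by rw [hesum]; norm_num
  have hnem1 : (∑ j, (e (-1)) j ^ 2) ≠ 0 := by rw [hesum]; norm_num
  obtain ⟨x₀, hx₀⟩ : ∃ x : {ξ : Fin k → ℂ // (∑ j, ξ j ^ 2) ≠ 0}, x = ⟨e 1, hne1⟩ := ⟨_, rfl⟩
  obtain ⟨x₁, hx₁⟩ : ∃ x : {ξ : Fin k → ℂ // (∑ j, ξ j ^ 2) ≠ 0}, x = ⟨e (-1), hnem1⟩ := ⟨_, rfl⟩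
  have hx₀v : (x₀ : Fin k → ℂ) = e 1 := by rw [hx₀]
  have hx₁v : (x₁ : Fin k → ℂ) = e (-1) := by rw [hx₁]
  -- the two paths
  have hval : ∀ (c : ℝ) (t : I), (∑ j, (e (Complex.exp (c * π * t * Complex.I))) j ^ 2) ≠ 0 := by
    intro c t
    rw [hesum, ← Complex.exp_nat_mul]
    exact Complex.exp_ne_zero _
  have hcont : ∀ c : ℝ, Continuous fun t : I =>
      (⟨e (Complex.exp (c * π * t * Complex.I)), hval c t⟩ :
        {ξ : Fin k → ℂ // (∑ j, ξ j ^ 2) ≠ 0}) := by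
    intro c
    apply Continuous.subtype_mk
    apply hecont.comp
    apply Complex.continuous_exp.comp
    have h : Continuous fun t : I => ((t : ℝ) : ℂ) :=
      Complex.continuous_ofReal.comp continuous_subtype_val
    exact (continuous_const.mul h).mul continuous_const
  have hstart : ∀ c : ℝ,
      (⟨e (Complex.exp (c * π * (0 : I) * Complex.I)), hval c 0⟩ :
        {ξ : Fin k → ℂ // (∑ j, ξ j ^ 2) ≠ 0}) = x₀ := by
    intro c
    rw [hx₀]
    apply Subtype.ext
    show e _ = e 1
    norm_num
  have hend1 : (⟨e (Complex.exp (((1 : ℝ) : ℂ) * π * (1 : I) * Complex.I)), hval 1 1⟩ :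
      {ξ : Fin k → ℂ // (∑ j, ξ j ^ 2) ≠ 0}) = x₁ := by
    rw [hx₁]
    apply Subtype.ext
    show e _ = e (-1)
    norm_num [Complex.exp_pi_mul_I]
  have hendm1 : (⟨e (Complex.exp (((-1 : ℝ) : ℂ) * π * (1 : I) * Complex.I)), hval (-1) 1⟩ :
      {ξ : Fin k → ℂ // (∑ j, ξ j ^ 2) ≠ 0}) = x₁ := by
    rw [hx₁]
    apply Subtype.ext
    show e _ = e (-1)
    have harg : Complex.exp (((-1 : ℝ) : ℂ) * ((π : ℝ) : ℂ) * (((1 : I) : ℝ) : ℂ) * Complex.I)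
        = -1 := by
      have h1 : (((1 : I) : ℝ) : ℂ) = 1 := by norm_num
      rw [h1, show ((-1 : ℝ) : ℂ) * ((π : ℝ) : ℂ) * 1 * Complex.I
          = -(((π : ℝ) : ℂ) * Complex.I) by push_cast; ring,
        Complex.exp_neg, Complex.exp_pi_mul_I]
      norm_num
    rw [harg]
  obtain ⟨γ, hγ⟩ : ∃ γ : Path x₀ x₁, ∀ t : I,
      (γ t : Fin k → ℂ) = e (Complex.exp (((1 : ℝ) : ℂ) * π * t * Complex.I)) :=
    ⟨{ toFun := fun t => ⟨e (Complex.exp (((1 : ℝ) : ℂ) * π * t * Complex.I)), hval 1 t⟩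
       continuous_toFun := hcont 1
       source' := hstart 1
       target' := hend1 }, fun t => rfl⟩
  obtain ⟨δp, hδp⟩ : ∃ δp : Path x₀ x₁, ∀ t : I,
      (δp t : Fin k → ℂ) = e (Complex.exp (((-1 : ℝ) : ℂ) * π * t * Complex.I)) :=
    ⟨{ toFun := fun t => ⟨e (Complex.exp (((-1 : ℝ) : ℂ) * π * t * Complex.I)), hval (-1) t⟩
       continuous_toFun := hcont (-1)
       source' := hstart (-1)
       target' := hendm1 }, fun t => rfl⟩
  -- simple connectivity gives a homotopy
  obtain ⟨F⟩ := SimplyConnectedSpace.paths_homotopic γ δp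
  -- push forward by the sum-of-squares map
  obtain ⟨G, hGdef⟩ : ∃ G : I × I → ℂ, G = fun p => ∑ j, ((F p : Fin k → ℂ) j) ^ 2 := ⟨_, rfl⟩
  have hGc : Continuous G := by
    rw [hGdef]
    apply continuous_finset_sum
    intro j _
    exact ((continuous_apply j).comp (continuous_subtype_val.comp F.continuous)).pow 2
  have hGne : ∀ p, G p ≠ 0 := by
    intro p
    rw [hGdef]
    exact (F p).2
  have hsq : ∀ (c : ℝ) (t : I),
      (∑ j, (e (Complex.exp (c * π * t * Complex.I))) j ^ 2)
        = Complex.exp ((2 * c * π * t : ℝ) * Complex.I) := by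
    intro c t
    rw [hesum, ← Complex.exp_nat_mul]
    congr 1
    push_cast
    ring
  have hG0 : ∀ t : I, G (0, t) = Complex.exp (2 * π * t * Complex.I) := by
    intro t
    rw [hGdef]
    simp only
    rw [show F ((0 : I), t) = γ t from F.apply_zero t]
    rw [hγ t]
    rw [hsq 1 t]
    push_cast
    ring_nf
  have hG1 : ∀ t : I, G (1, t) = Complex.exp (-(2 * π * t) * Complex.I) := by
    intro t
    rw [hGdef]
    simp only
    rw [show F ((1 : I), t) = δp t from F.apply_one t]
    rw [hδp t]
    rw [hsq (-1) t]
    push_cast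
    ring_nf
  have hGs0 : ∀ s : I, G (s, 0) = 1 := by
    intro s
    rw [hGdef]
    simp only
    rw [show F (s, (0 : I)) = x₀ from F.source s]
    rw [hx₀v]
    rw [hesum]
    norm_num
  have hGs1 : ∀ s : I, G (s, 1) = 1 := by
    intro s
    rw [hGdef]
    simp only
    rw [show F (s, (1 : I)) = x₁ from F.target s]
    rw [hx₁v]
    rw [hesum]
    norm_num
  exact aux_no_homotopy G hGc hGne hG0 hG1 hGs0 hGs1
end

section
/- For every k ≥ 1, the subspace Q_k ∖ (H ∪ H′) = {[z] ∈ ℙ(ℂ^{k+2}) : z₁² + ⋯ + z_{k+2}² = 0 and z₁² + z₂² ≠ 0} of complex projective space (with the subspace topology) is not simply connected. -/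
open Topology Set unitInterval


/-- A continuous function whose exponential is constant is constant. -/
lemma aux_exp_const {u : ℝ → ℂ} (hu : Continuous u)
    (hc : ∀ t, Complex.exp (u t) = Complex.exp (u 0)) (b : ℝ) : u b = u 0 := by
  have key : ∀ t, ∃ n : ℤ, u t = u 0 + n * (2 * Real.pi * Complex.I) := fun t =>
    Complex.exp_eq_exp_iff_exists_int.mp (hc t)
  set v : ℝ → ℝ := fun t => (u t - u 0).im / (2 * Real.pi) with hv
  have hπ : (0:ℝ) < 2 * Real.pi := by positivity
  have hvint : ∀ t, ∃ n : ℤ, v t = n ∧ u t = u 0 + n * (2 * Real.pi * Complex.I) := by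
    intro t
    obtain ⟨n, hn⟩ := key t
    refine ⟨n, ?_, hn⟩
    have h1 : u t - u 0 = (n : ℂ) * (2 * Real.pi * Complex.I) := by rw [hn]; ring
    rw [hv]
    simp only [h1]
    have : ((n : ℂ) * (2 * Real.pi * Complex.I)).im = n * (2 * Real.pi) := by
      simp [Complex.mul_im]
    rw [this]
    field_simp
  have hvc : Continuous v := by
    exact ((Complex.continuous_im.comp (hu.sub continuous_const)).div_const _)
  have hv0 : v 0 = 0 := by simp [hv]
  obtain ⟨n, hnv, hnu⟩ := hvint b
  have hn0 : n = 0 := by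
    by_contra hne
    have hhalf : ∃ t, v t = (if 0 < (n:ℝ) then (1:ℝ)/2 else -(1/2)) := by
      have hIVT := intermediate_value_uIcc (a := (0:ℝ)) (b := b) (f := v) hvc.continuousOn
      have hy : (if 0 < (n:ℝ) then (1:ℝ)/2 else -(1/2)) ∈ Set.uIcc (v 0) (v b) := by
        rw [hv0, hnv]
        rcases lt_trichotomy (n:ℝ) 0 with h | h | h
        · have hint : n < 0 := by exact_mod_cast h
          have : (n:ℝ) ≤ -1 := by exact_mod_cast (by omega : n ≤ -1)
          simp only [if_neg (not_lt.mpr h.le)]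
          rw [Set.mem_uIcc]; right; constructor <;> linarith
        · exact absurd (by exact_mod_cast h) hne
        · have hint : 0 < n := by exact_mod_cast h
          have : (1:ℝ) ≤ n := by exact_mod_cast (by omega : (1:ℤ) ≤ n)
          simp only [if_pos h]
          rw [Set.mem_uIcc]; left; constructor <;> linarith
      obtain ⟨t, _, ht⟩ := hIVT hy
      exact ⟨t, ht⟩
    obtain ⟨t, ht⟩ := hhalf
    obtain ⟨m, hm, _⟩ := hvint t
    rw [hm] at ht
    split_ifs at ht
    · have h2 : (2*m : ℝ) = 1 := by rw [ht]; ring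
      have : (2*m : ℤ) = 1 := by exact_mod_cast h2
      omega
    · have h2 : (2*m : ℝ) = -1 := by rw [ht]; ring
      have : (2*m : ℤ) = -1 := by exact_mod_cast h2
      omega
  rw [hnu, hn0]; simp


open Complex Set unitInterval in
lemma aux_telescope {F : ℕ → ℂ} (h : ∀ j, F j ≠ 0) (m : ℕ) :
    ∏ j ∈ Finset.range m, (F (j+1) / F j) = F m / F 0 := by
  induction m with
  | zero => simp [div_self (h 0)]
  | succ n ih =>
    rw [Finset.prod_range_succ, ih, div_mul_div_comm, mul_comm (F 0) (F n),
      mul_div_mul_left _ _ (h n)]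

open Complex Set unitInterval in
/-- Continuous logarithm for a nonvanishing continuous function on the unit square,
extended to the plane by clamping, with a prescribed lift on the left edge. -/
lemma aux_log_square (G : C(I × I, ℂ)) (hne : ∀ p, G p ≠ 0)
    (u₀ : ℝ → ℂ) (hu₀ : Continuous u₀)
    (hu : ∀ t : ℝ, Complex.exp (u₀ t) = G (0, projIcc 0 1 zero_le_one t)) :
    ∃ L : ℝ × ℝ → ℂ, Continuous L ∧
      (∀ p : ℝ × ℝ, Complex.exp (L p) =
        G (projIcc 0 1 zero_le_one p.1, projIcc 0 1 zero_le_one p.2)) ∧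
      (∀ t, L (0, t) = u₀ t) := by
  set c : ℝ → I := projIcc 0 1 zero_le_one with hc
  have hc0 : c 0 = 0 := by simp [hc, projIcc_left]
  set K : ℝ × ℝ → ℂ := fun p => G (c p.1, c p.2) with hK
  have hKc : Continuous K :=
    G.continuous.comp ((continuous_projIcc.comp continuous_fst).prodMk
      (continuous_projIcc.comp continuous_snd))
  have hKne : ∀ p, K p ≠ 0 := fun p => hne _
  -- positive lower bound for ‖G‖
  obtain ⟨q₀, -, hq₀⟩ := isCompact_univ.exists_isMinOn (Set.univ_nonempty)
    ((continuous_norm.comp G.continuous).continuousOn)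
  set ε : ℝ := ‖G q₀‖ with hε
  have hεpos : 0 < ε := norm_pos_iff.mpr (hne q₀)
  have hεle : ∀ q, ε ≤ ‖G q‖ := fun q => hq₀ (Set.mem_univ q)
  -- uniform continuity
  obtain ⟨δ, hδpos, hδ⟩ := Metric.uniformContinuous_iff.mp
    (CompactSpace.uniformContinuous_of_continuous G.continuous) ε hεpos
  -- horizontal increments of K
  have hK2 : ∀ a b t : ℝ, |a - b| < δ → ‖K (a, t) - K (b, t)‖ < ε := by
    intro a b t hab
    have hlip : dist (c a) (c b) ≤ dist a b := by
      simpa using (LipschitzWith.projIcc (zero_le_one)).dist_le_mul a b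
    have h1 : dist ((c a, c t) : I × I) ((c b, c t)) < δ := by
      rw [Prod.dist_eq]
      simp only [dist_self]
      rw [max_eq_left dist_nonneg]
      calc dist (c a) (c b) ≤ dist a b := hlip
        _ < δ := by rwa [Real.dist_eq]
    have := hδ h1
    rwa [Complex.dist_eq] at this
  -- choose n
  obtain ⟨n, hn⟩ := exists_nat_one_div_lt hδpos
  set N : ℕ := n + 1 with hN
  have hNpos : (0:ℝ) < N := by positivity
  have hNlt : 1 / (N:ℝ) < δ := by exact_mod_cast hn
  -- the ratios
  set R : ℝ × ℝ → ℕ → ℂ := fun p j =>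
    K (min p.1 (((j:ℝ)+1) / (N:ℝ)), p.2) / K (min p.1 ((j:ℝ) / (N:ℝ)), p.2) with hR
  have hRball : ∀ p j, ‖R p j - 1‖ < 1 := by
    intro p j
    have hmin : |min p.1 (((j:ℝ)+1) / N) - min p.1 ((j:ℝ) / N)| < δ := by
      have h1 : dist (min p.1 (((j:ℝ)+1) / N)) (min p.1 ((j:ℝ) / N)) ≤
          dist (((j:ℝ)+1)/N) ((j:ℝ)/N) := by
        simpa using (LipschitzWith.id.const_min p.1).dist_le_mul (((j:ℝ)+1)/N) ((j:ℝ)/N)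
      rw [Real.dist_eq, Real.dist_eq] at h1
      have h2 : |((j:ℝ)+1)/N - (j:ℝ)/N| = 1 / N := by
        rw [div_sub_div_same]
        simp [_root_.abs_of_nonneg (by positivity : (0:ℝ) ≤ 1/(N:ℝ))]
      calc |min p.1 (((j:ℝ)+1) / N) - min p.1 ((j:ℝ) / N)| ≤ |((j:ℝ)+1)/N - (j:ℝ)/N| := h1
        _ = 1 / N := h2
        _ < δ := hNlt
    have hnum := hK2 _ _ p.2 hmin
    have hden := hKne (min p.1 ((j:ℝ) / N), p.2)
    have hdenabs : 0 < ‖K (min p.1 ((j:ℝ) / N), p.2)‖ :=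
      norm_pos_iff.mpr hden
    have hkey : K (min p.1 (((j:ℝ)+1) / N), p.2) / K (min p.1 ((j:ℝ) / N), p.2) - 1
        = (K (min p.1 (((j:ℝ)+1) / N), p.2) - K (min p.1 ((j:ℝ) / N), p.2))
          / K (min p.1 ((j:ℝ) / N), p.2) := by
      field_simp
    simp only [hR]
    rw [hkey, norm_div, div_lt_one hdenabs]
    exact lt_of_lt_of_le hnum (hεle _)
  have hRslit : ∀ p j, R p j ∈ Complex.slitPlane := by
    intro p j
    rw [Complex.mem_slitPlane_iff]
    left
    have h1 := hRball p j
    have h2 : |(R p j - 1).re| ≤ ‖R p j - 1‖ := Complex.abs_re_le_norm _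
    have h3 : (R p j - 1).re = (R p j).re - 1 := by simp
    rw [h3] at h2
    have h4 := abs_lt.mp (lt_of_le_of_lt h2 h1)
    linarith [h4.1]
  have hRne : ∀ p j, R p j ≠ 0 := fun p j => div_ne_zero (hKne _) (hKne _)
  have hRcont : ∀ j, Continuous fun p : ℝ × ℝ => R p j := by
    intro j
    apply Continuous.div
    · exact hKc.comp ((continuous_fst.min continuous_const).prodMk continuous_snd)
    · exact hKc.comp ((continuous_fst.min continuous_const).prodMk continuous_snd)
    · exact fun p => hKne _
  -- the lift
  refine ⟨fun p => u₀ p.2 + ∑ j ∈ Finset.range N, Complex.log (R p j), ?_, ?_, ?_⟩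
  · apply Continuous.add (hu₀.comp continuous_snd)
    apply continuous_finset_sum
    intro j _
    rw [continuous_iff_continuousAt]
    intro p
    exact ContinuousAt.clog ((hRcont j).continuousAt) (hRslit p j)
  · intro p
    show Complex.exp (u₀ p.2 + ∑ j ∈ Finset.range N, Complex.log (R p j)) = G (c p.1, c p.2)
    rw [Complex.exp_add, Complex.exp_sum]
    have hterm : ∀ j ∈ Finset.range N, Complex.exp (Complex.log (R p j)) = R p j :=
      fun j _ => Complex.exp_log (hRne p j)
    rw [Finset.prod_congr rfl hterm]
    set F : ℕ → ℂ := fun j => K (min p.1 ((j:ℝ) / (N:ℝ)), p.2) with hF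
    have hcongr : ∀ j ∈ Finset.range N, R p j = F (j+1) / F j := by
      intro j _
      simp only [hR, hF]
      push_cast
      rfl
    rw [Finset.prod_congr rfl hcongr, aux_telescope (F := F) (fun j => hKne _) N]
    simp only [hF, Nat.cast_zero, zero_div, div_self (ne_of_gt hNpos)]
    have hcm1 : c (min p.1 1) = c p.1 := by
      rcases le_total p.1 1 with h | h
      · rw [min_eq_left h]
      · rw [min_eq_right h, hc, projIcc_of_right_le _ h, projIcc_of_right_le _ le_rfl]
    have hcm0 : c (min p.1 0) = (0 : I) := by
      rcases le_total p.1 0 with h | h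
      · rw [min_eq_left h, hc, projIcc_of_le_left _ h]; simp
      · rw [min_eq_right h, hc0]
    have hK1 : K (min p.1 1, p.2) = G (c p.1, c p.2) := by
      simp only [hK, hcm1]
    have hK0 : K (min p.1 0, p.2) = Complex.exp (u₀ p.2) := by
      simp only [hK, hcm0]
      rw [hu p.2]
    rw [hK1, hK0, mul_comm, div_mul_cancel₀ _ (Complex.exp_ne_zero _)]
  · intro t
    show u₀ t + ∑ j ∈ Finset.range N, Complex.log (R (0, t) j) = u₀ t
    have hz : ∀ j ∈ Finset.range N, Complex.log (R (0, t) j) = 0 := by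
      intro j _
      have h1 : min (0:ℝ) (((j:ℝ)+1) / (N:ℝ)) = 0 := min_eq_left (by positivity)
      have h2 : min (0:ℝ) ((j:ℝ) / (N:ℝ)) = 0 := min_eq_left (by positivity)
      have hone : R (0, t) j = 1 := by
        simp only [hR]
        rw [h1, h2, div_self (hKne _)]
      rw [hone, Complex.log_one]
    rw [Finset.sum_congr rfl hz]
    simp


/-- A function on a quotient is continuous on an open set whose saturated preimage
carries a continuous composite. -/
lemma aux_quot_restrict {A B : Type*} [TopologicalSpace A] [TopologicalSpace B]
    {q : A → B} (hq : IsQuotientMap q) {U : Set B} (hU : IsOpen (q ⁻¹' U))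
    {f : B → ℂ} (hf : Continuous fun a : q ⁻¹' U => f (q a)) :
    ContinuousOn f U := by
  rw [continuousOn_iff']
  intro O hO
  refine ⟨{b | b ∈ U ∧ f b ∈ O}, ?_, ?_⟩
  · rw [← hq.isOpen_preimage]
    have h1 : IsOpen ((fun a : q ⁻¹' U => f (q a)) ⁻¹' O) := hO.preimage hf
    have h2 : IsOpen (Subtype.val '' ((fun a : q ⁻¹' U => f (q a)) ⁻¹' O)) :=
      hU.isOpenMap_subtype_val _ h1
    convert h2 using 1
    ext a
    constructor
    · rintro ⟨haU, haO⟩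
      exact ⟨⟨a, haU⟩, haO, rfl⟩
    · rintro ⟨⟨a', ha'⟩, haO, rfl⟩
      exact ⟨ha', haO⟩
  · ext b
    simp only [Set.mem_inter_iff, Set.mem_preimage, Set.mem_setOf_eq]
    tauto

/-- Complex projective space `ℙ(ℂ^n)` carries the quotient topology coming from
`ℂ^n ∖ {0}`. -/
instance (n : ℕ) : TopologicalSpace (Projectivization ℂ (Fin n → ℂ)) :=
  inferInstanceAs (TopologicalSpace (Quotient (projectivizationSetoid ℂ (Fin n → ℂ))))

/-- Factorization of a sum of two squares over `ℂ`. -/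
lemma aux_factor (z w : ℂ) : z^2 + w^2 = (z + Complex.I*w) * (z - Complex.I*w) := by
  have h := Complex.I_sq
  linear_combination (w^2) * h

lemma aux_ne {z w : ℂ} (h : z^2 + w^2 ≠ 0) :
    z + Complex.I*w ≠ 0 ∧ z - Complex.I*w ≠ 0 := by
  rw [aux_factor] at h
  exact mul_ne_zero_iff.mp h

/-- The scalar relating the chosen representative of `mk v` to `v`. -/
lemma aux_rep_spec {n : ℕ} (v : Fin n → ℂ) (hv : v ≠ 0) :
    ∃ a : ℂ, a ≠ 0 ∧ (Projectivization.mk ℂ v hv).rep = a • v := by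
  obtain ⟨a, ha⟩ := (Projectivization.mk_eq_mk_iff' ℂ _ _
    (Projectivization.rep_nonzero _) hv).mp
    (Projectivization.mk_rep (Projectivization.mk ℂ v hv))
  refine ⟨a, ?_, ha.symm⟩
  rintro rfl
  rw [zero_smul] at ha
  exact Projectivization.rep_nonzero _ ha.symm

/-- The coordinates of the basic loop. -/
noncomputable def auxW (t : ℝ) : ℕ → ℂ := fun i =>
  if i = 0 then ((Real.cos (2*Real.pi*t) : ℝ) : ℂ)
  else if i = 1 then ((Real.sin (2*Real.pi*t) : ℝ) : ℂ)
  else if i = 2 then Complex.I else 0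

noncomputable def auxVec (k : ℕ) (t : ℝ) : Fin (k+2) → ℂ := fun j => auxW t j.val

lemma auxVec_zero (k : ℕ) (t : ℝ) :
    auxVec k t 0 = ((Real.cos (2*Real.pi*t) : ℝ) : ℂ) := by
  simp [auxVec, auxW]

lemma auxVec_one (k : ℕ) (t : ℝ) :
    auxVec k t 1 = ((Real.sin (2*Real.pi*t) : ℝ) : ℂ) := by
  simp [auxVec, auxW]

lemma auxVec_pyth (k : ℕ) (t : ℝ) : (auxVec k t 0)^2 + (auxVec k t 1)^2 = 1 := by
  rw [auxVec_zero, auxVec_one]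
  norm_cast
  rw [add_comm]
  exact Real.sin_sq_add_cos_sq _

lemma auxVec_ne (k : ℕ) (t : ℝ) : auxVec k t ≠ 0 := by
  intro h
  have h0 : auxVec k t 0 = 0 := by rw [h]; rfl
  have h1 : auxVec k t 1 = 0 := by rw [h]; rfl
  have := auxVec_pyth k t
  rw [h0, h1] at this
  norm_num at this

lemma auxVec_sum (k : ℕ) (hk : 1 ≤ k) (t : ℝ) :
    ∑ j, (auxVec k t j)^2 = 0 := by
  have h1 : ∑ j : Fin (k+2), (auxVec k t j)^2
      = ∑ i ∈ Finset.range (k+2), (auxW t i)^2 :=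
    Fin.sum_univ_eq_sum_range (fun i => (auxW t i)^2) (k+2)
  have h2 : ∑ i ∈ Finset.range 3, (auxW t i)^2
      = ∑ i ∈ Finset.range (k+2), (auxW t i)^2 := by
    apply Finset.sum_subset (Finset.range_subset_range.mpr (by omega))
    intro i _ hni
    have hi : 3 ≤ i := by simpa using hni
    have : auxW t i = 0 := by
      simp only [auxW, if_neg (by omega : ¬ i = 0), if_neg (by omega : ¬ i = 1),
        if_neg (by omega : ¬ i = 2)]
    rw [this]
    ring
  rw [h1, ← h2]
  have e0 : auxW t 0 = ((Real.cos (2*Real.pi*t) : ℝ) : ℂ) := by simp [auxW]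
  have e1 : auxW t 1 = ((Real.sin (2*Real.pi*t) : ℝ) : ℂ) := by simp [auxW]
  have e2 : auxW t 2 = Complex.I := by simp [auxW]
  rw [Finset.sum_range_succ, Finset.sum_range_succ, Finset.sum_range_one, e0, e1, e2,
    Complex.I_sq]
  have : ((Real.cos (2*Real.pi*t) : ℝ) : ℂ)^2 + ((Real.sin (2*Real.pi*t) : ℝ) : ℂ)^2 = 1 := by
    have := auxVec_pyth k t
    rwa [auxVec_zero, auxVec_one] at this
  linear_combination this

/-- The basic loop in projective space. -/
noncomputable def auxPt (k : ℕ) (t : ℝ) : Projectivization ℂ (Fin (k+2) → ℂ) :=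
  Projectivization.mk ℂ (auxVec k t) (auxVec_ne k t)

lemma auxPt_mem (k : ℕ) (hk : 1 ≤ k) (t : ℝ) :
    (∑ j, (auxPt k t).rep j ^ 2) = 0 ∧
      (auxPt k t).rep 0 ^ 2 + (auxPt k t).rep 1 ^ 2 ≠ 0 := by
  obtain ⟨a, ha0, harep⟩ := aux_rep_spec (auxVec k t) (auxVec_ne k t)
  rw [show (auxPt k t).rep = a • auxVec k t from harep]
  constructor
  · simp only [Pi.smul_apply, smul_eq_mul, mul_pow]
    rw [← Finset.mul_sum, auxVec_sum k hk t, mul_zero]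
  · simp only [Pi.smul_apply, smul_eq_mul]
    rw [show (a * auxVec k t 0)^2 + (a * auxVec k t 1)^2
        = a^2 * ((auxVec k t 0)^2 + (auxVec k t 1)^2) from by ring, auxVec_pyth k t, mul_one]
    exact pow_ne_zero 2 ha0

/-- The scale-invariant coordinate function. -/
noncomputable def auxF (k : ℕ) (x : Projectivization ℂ (Fin (k+2) → ℂ)) : ℂ :=
  (x.rep 0 - Complex.I * x.rep 1) / (x.rep 0 + Complex.I * x.rep 1)

lemma aux_cond (k : ℕ) (v : Fin (k+2) → ℂ) (hv : v ≠ 0) :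
    ((Projectivization.mk ℂ v hv).rep 0 ^ 2 + (Projectivization.mk ℂ v hv).rep 1 ^ 2 ≠ 0)
      ↔ (v 0 ^ 2 + v 1 ^ 2 ≠ 0) := by
  obtain ⟨a, ha0, harep⟩ := aux_rep_spec v hv
  rw [harep]
  simp only [Pi.smul_apply, smul_eq_mul]
  rw [show (a * v 0)^2 + (a * v 1)^2 = a^2 * (v 0^2 + v 1^2) from by ring]
  simp [pow_ne_zero 2 ha0, ha0]

lemma auxF_mk (k : ℕ) (v : Fin (k+2) → ℂ) (hv : v ≠ 0) (hv2 : v 0^2 + v 1^2 ≠ 0) :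
    auxF k (Projectivization.mk ℂ v hv)
      = (v 0 - Complex.I * v 1) / (v 0 + Complex.I * v 1) := by
  obtain ⟨a, ha0, harep⟩ := aux_rep_spec v hv
  unfold auxF
  rw [harep]
  simp only [Pi.smul_apply, smul_eq_mul]
  rw [show a * v 0 - Complex.I * (a * v 1) = a * (v 0 - Complex.I * v 1) from by ring,
    show a * v 0 + Complex.I * (a * v 1) = a * (v 0 + Complex.I * v 1) from by ring,
    mul_div_mul_left _ _ ha0]

lemma auxF_value (k : ℕ) (t : ℝ) :
    auxF k (auxPt k t) = Complex.exp (((-(4*Real.pi*t) : ℝ) : ℂ) * Complex.I) := by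
  have hv2 : (auxVec k t) 0 ^ 2 + (auxVec k t) 1 ^ 2 ≠ 0 := by
    rw [auxVec_pyth]; exact one_ne_zero
  rw [show auxPt k t = Projectivization.mk ℂ (auxVec k t) (auxVec_ne k t) from rfl,
    auxF_mk k _ _ hv2, auxVec_zero, auxVec_one, Complex.ofReal_cos, Complex.ofReal_sin]
  set θ : ℂ := ((2*Real.pi*t : ℝ) : ℂ) with hθ
  have h1 : Complex.cos θ - Complex.I * Complex.sin θ = Complex.exp (-θ * Complex.I) := by
    rw [Complex.exp_mul_I, Complex.cos_neg, Complex.sin_neg]; ring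
  have h2 : Complex.cos θ + Complex.I * Complex.sin θ = Complex.exp (θ * Complex.I) := by
    rw [Complex.exp_mul_I]; ring
  rw [h1, h2, ← Complex.exp_sub]
  congr 1
  rw [hθ]
  push_cast
  ring

lemma auxPt_loop (k : ℕ) : auxPt k 1 = auxPt k 0 := by
  apply (Projectivization.mk_eq_mk_iff' ℂ _ _ _ _).mpr
  refine ⟨1, ?_⟩
  rw [one_smul]
  funext j
  simp only [auxVec, auxW]
  split_ifs <;> norm_num [Real.cos_two_pi, Real.sin_two_pi]

lemma auxVec_continuous (k : ℕ) : Continuous fun t : ℝ => auxVec k t := by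
  apply continuous_pi
  intro j
  simp only [auxVec, auxW]
  split_ifs <;> fun_prop

lemma aux_mk_quotientMap (k : ℕ) :
    IsQuotientMap (fun u : {w : Fin (k+2) → ℂ // w ≠ 0} =>
      Projectivization.mk ℂ u.1 u.2) := by
  letI : Setoid {w : Fin (k+2) → ℂ // w ≠ 0} := projectivizationSetoid ℂ (Fin (k+2) → ℂ)
  exact isQuotientMap_quotient_mk'

lemma auxPt_continuous (k : ℕ) : Continuous fun t : ℝ => auxPt k t := by
  have h1 : Continuous fun t : ℝ => (⟨auxVec k t, auxVec_ne k t⟩ :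
      {w : Fin (k+2) → ℂ // w ≠ 0}) := (auxVec_continuous k).subtype_mk _
  exact (aux_mk_quotientMap k).continuous.comp h1

/-- For every `k ≥ 1`, the subspace
`Q_k ∖ (H ∪ H') = {[z] ∈ ℙ(ℂ^{k+2}) : ∑ zⱼ² = 0 and z₁² + z₂² ≠ 0}` of complex
projective space is not simply connected.  (Both conditions are invariant under
scaling, so testing them on the chosen representative `x.rep` defines the correct
set; note `z₁² + z₂² = (z₁ - i z₂)(z₁ + i z₂)`.) -/
theorem stmt_5 (k : ℕ) (hk : 1 ≤ k) :
    ¬ SimplyConnectedSpace {x : Projectivization ℂ (Fin (k + 2) → ℂ) //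
        (∑ j, x.rep j ^ 2) = 0 ∧ x.rep 0 ^ 2 + x.rep 1 ^ 2 ≠ 0} := by
  intro hSC
  set T := {x : Projectivization ℂ (Fin (k + 2) → ℂ) //
      (∑ j, x.rep j ^ 2) = 0 ∧ x.rep 0 ^ 2 + x.rep 1 ^ 2 ≠ 0} with hT
  -- the base point and the loop
  let x₀ : T := ⟨auxPt k 0, auxPt_mem k hk 0⟩
  let γ : Path x₀ x₀ :=
    { toFun := fun t => ⟨auxPt k (t : ℝ), auxPt_mem k hk (t : ℝ)⟩
      continuous_toFun := ((auxPt_continuous k).comp continuous_subtype_val).subtype_mk _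
      source' := by
        apply Subtype.ext
        show auxPt k ((0 : I) : ℝ) = auxPt k 0
        norm_num
      target' := by
        apply Subtype.ext
        show auxPt k ((1 : I) : ℝ) = auxPt k 0
        rw [show ((1 : I) : ℝ) = 1 by norm_num, auxPt_loop] }
  -- the coordinate function is continuous on T
  set U : Set (Projectivization ℂ (Fin (k+2) → ℂ)) :=
    {x | x.rep 0 ^ 2 + x.rep 1 ^ 2 ≠ 0} with hU
  set q : {w : Fin (k+2) → ℂ // w ≠ 0} → Projectivization ℂ (Fin (k+2) → ℂ) :=
    fun u => Projectivization.mk ℂ u.1 u.2 with hq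
  have hpre : ∀ u : {w : Fin (k+2) → ℂ // w ≠ 0},
      q u ∈ U ↔ u.1 0 ^ 2 + u.1 1 ^ 2 ≠ 0 := fun u => aux_cond k u.1 u.2
  have hUopen : IsOpen (q ⁻¹' U) := by
    have : q ⁻¹' U = {u : {w : Fin (k+2) → ℂ // w ≠ 0} | u.1 0 ^ 2 + u.1 1 ^ 2 ≠ 0} := by
      ext u; exact hpre u
    rw [this]
    have hg : Continuous fun u : {w : Fin (k+2) → ℂ // w ≠ 0} =>
        u.1 0 ^ 2 + u.1 1 ^ 2 :=
      (((continuous_apply (0 : Fin (k+2))).comp continuous_subtype_val).pow 2).add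
        (((continuous_apply (1 : Fin (k+2))).comp continuous_subtype_val).pow 2)
    exact IsOpen.preimage hg isOpen_compl_singleton
  have hcomp : Continuous fun u : q ⁻¹' U => auxF k (q u) := by
    have heq : ∀ u : q ⁻¹' U, auxF k (q u.1)
        = (u.1.1 0 - Complex.I * u.1.1 1) / (u.1.1 0 + Complex.I * u.1.1 1) :=
      fun u => auxF_mk k u.1.1 u.1.2 ((hpre u.1).mp u.2)
    rw [show (fun u : q ⁻¹' U => auxF k (q u)) = fun u : q ⁻¹' U =>
        (u.1.1 0 - Complex.I * u.1.1 1) / (u.1.1 0 + Complex.I * u.1.1 1) from funext heq]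
    have hval : Continuous fun u : q ⁻¹' U => u.1.1 :=
      continuous_subtype_val.comp continuous_subtype_val
    apply Continuous.div
    · exact ((continuous_apply (0 : Fin (k+2))).comp hval).sub
        (continuous_const.mul ((continuous_apply (1 : Fin (k+2))).comp hval))
    · exact ((continuous_apply (0 : Fin (k+2))).comp hval).add
        (continuous_const.mul ((continuous_apply (1 : Fin (k+2))).comp hval))
    · exact fun u => (aux_ne ((hpre u.1).mp u.2)).1
  have hFU : ContinuousOn (auxF k) U := aux_quot_restrict (aux_mk_quotientMap k) hUopen hcomp
  set f : T → ℂ := fun x => auxF k x.1 with hf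
  have hfc : Continuous f := hFU.comp_continuous continuous_subtype_val fun x => x.2.2
  have hfne : ∀ x : T, f x ≠ 0 := fun x =>
    div_ne_zero (aux_ne x.2.2).2 (aux_ne x.2.2).1
  -- the homotopy from the loop to the constant path
  obtain ⟨H⟩ := SimplyConnectedSpace.paths_homotopic γ (Path.refl x₀)
  set G : C(I × I, ℂ) := ⟨fun p => f (H p), hfc.comp H.continuous⟩ with hG
  have hGne : ∀ p, G p ≠ 0 := fun p => hfne _
  -- the lift on the left edge
  set c : ℝ → I := projIcc 0 1 zero_le_one with hc
  set u₀ : ℝ → ℂ := fun t => ((-(4*Real.pi*((c t : I) : ℝ)) : ℝ) : ℂ) * Complex.I with hu₀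
  have hcc : Continuous fun t : ℝ => ((c t : I) : ℝ) :=
    continuous_subtype_val.comp continuous_projIcc
  have hu₀c : Continuous u₀ := by
    apply Continuous.mul _ continuous_const
    exact Complex.continuous_ofReal.comp ((continuous_const.mul hcc).neg)
  have hu₀val : ∀ t : ℝ, Complex.exp (u₀ t) = G (0, c t) := by
    intro t
    show Complex.exp (u₀ t) = f (H (0, c t))
    rw [H.apply_zero]
    show Complex.exp (u₀ t) = auxF k (auxPt k ((c t : I) : ℝ))
    rw [auxF_value k]
  obtain ⟨L, hLc, hLexp, hL0⟩ := aux_log_square G hGne u₀ hu₀c hu₀val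
  -- values on corners via side constancy
  have hc0 : c 0 = 0 := by simp [hc, projIcc_left]
  have hc1 : c 1 = 1 := by simp [hc, projIcc_right]
  have hmem0 : (0 : I) ∈ ({0, 1} : Set I) := Set.mem_insert _ _
  have hmem1 : (1 : I) ∈ ({0, 1} : Set I) := Set.mem_insert_iff.mpr (Or.inr rfl)
  have hside1 : L (1, 0) = L (0, 0) := by
    apply aux_exp_const (hLc.comp (continuous_id.prodMk continuous_const))
    intro s
    show Complex.exp (L (s, 0)) = Complex.exp (L (0, 0))
    rw [hLexp (s, 0), hLexp (0, 0)]
    show f (H (c s, c 0)) = f (H (c 0, c 0))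
    rw [hc0, H.eq_fst _ hmem0, H.eq_fst _ hmem0]
  have hside2 : L (1, 1) = L (1, 0) := by
    apply aux_exp_const (hLc.comp (continuous_const.prodMk continuous_id))
    intro s
    show Complex.exp (L (1, s)) = Complex.exp (L (1, 0))
    rw [hLexp (1, s), hLexp (1, 0)]
    show f (H (c 1, c s)) = f (H (c 1, c 0))
    rw [hc1, H.apply_one, H.apply_one]
    rfl
  have hside3 : L (1, 1) = L (0, 1) := by
    apply aux_exp_const (hLc.comp (continuous_id.prodMk continuous_const))
    intro s
    show Complex.exp (L (s, 1)) = Complex.exp (L (0, 1))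
    rw [hLexp (s, 1), hLexp (0, 1)]
    show f (H (c s, c 1)) = f (H (c 0, c 1))
    rw [hc1, H.eq_fst _ hmem1, H.eq_fst _ hmem1]
  -- compute the two left corners
  have hcorner0 : L (0, 0) = 0 := by
    rw [hL0 0, hu₀]
    simp [hc0]
  have hcorner1 : L (0, 1) = ((-(4*Real.pi) : ℝ) : ℂ) * Complex.I := by
    rw [hL0 1, hu₀]
    simp [hc1]
  have : ((-(4*Real.pi) : ℝ) : ℂ) * Complex.I = 0 := by
    rw [← hcorner1, ← hside3, hside2, hside1, hcorner0]
  simp only [mul_eq_zero, Complex.I_ne_zero, or_false, Complex.ofReal_eq_zero] at this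
  have := Real.pi_ne_zero
  nlinarith [Real.pi_pos]
end

section
/- There exist points a, b ∈ S² and a homeomorphism h : Q₂ → S² × S² such that h maps the set Q₂ ∩ (H ∪ H′) = {[z] ∈ Q₂ : z₁² + z₂² = 0} onto ({a, −a} × S²) ∪ (S² × {b, −b}). Consequently Q₂ ∖ (H ∪ H′) is homeomorphic to (S² ∖ {a, −a}) × (S² ∖ {b, −b}). -/
/-- The unit 2-sphere `S² ⊂ ℝ³`. -/
abbrev TwoSphere : Type := Metric.sphere (0 : EuclideanSpace ℝ (Fin 3)) 1

/-- The quadric `Q₂ = {[z] ∈ ℙ(ℂ⁴) : z₁² + z₂² + z₃² + z₄² = 0}` (scale-invariant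
condition tested on the chosen representative). -/
abbrev Qtwo : Type :=
  {x : Projectivization ℂ (Fin 4 → ℂ) // (∑ j, x.rep j ^ 2) = 0}

set_option linter.unreachableTactic false
set_option linter.unusedTactic false

open Complex
noncomputable section
abbrev E3 := EuclideanSpace ℝ (Fin 3)

lemma cont3 {X : Type*} [TopologicalSpace X] {f g h : X → ℝ} (hf : Continuous f)
    (hg : Continuous g) (hh : Continuous h) :
    Continuous (fun x => (WithLp.toLp 2 ![f x, g x, h x] : E3)) := by
  refine (PiLp.continuous_toLp 2 _).comp ?_
  apply continuous_pi
  intro i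
  fin_cases i <;> simpa

lemma normE3 (p : E3) : ‖p‖ = 1 ↔ p 0 ^2 + p 1 ^2 + p 2 ^2 = 1 := by
  rw [EuclideanSpace.norm_eq]
  rw [show (∑ i, ‖p i‖^2) = p 0^2 + p 1^2 + p 2^2 by
    simp [Fin.sum_univ_three, _root_.sq_abs]]
  constructor
  · intro h
    have := Real.sq_sqrt (by positivity : (0:ℝ) ≤ p 0^2 + p 1^2 + p 2^2)
    rw [h] at this; linarith [this]
  · intro h; rw [h, Real.sqrt_one]

@[fun_prop] lemma contNormSq : Continuous Complex.normSq := Complex.continuous_normSq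

def Az (z : Fin 4 → ℂ) : ℂ := z 0 + I * z 1
def Bz (z : Fin 4 → ℂ) : ℂ := z 2 + I * z 3
def Cz (z : Fin 4 → ℂ) : ℂ := z 2 - I * z 3
def Dz (z : Fin 4 → ℂ) : ℂ := z 0 - I * z 1

def P00 (z : Fin 4 → ℂ) : ℝ := normSq (Az z) + normSq (Bz z)
def P11 (z : Fin 4 → ℂ) : ℝ := normSq (Cz z) + normSq (Dz z)
def P01 (z : Fin 4 → ℂ) : ℂ := -(Az z * (starRingEnd ℂ) (Cz z)) + Bz z * (starRingEnd ℂ) (Dz z)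
def Q00 (z : Fin 4 → ℂ) : ℝ := normSq (Az z) + normSq (Cz z)
def Q11 (z : Fin 4 → ℂ) : ℝ := normSq (Bz z) + normSq (Dz z)
def Q01 (z : Fin 4 → ℂ) : ℂ := (starRingEnd ℂ) (Az z) * Bz z - (starRingEnd ℂ) (Cz z) * Dz z
def Tz (z : Fin 4 → ℂ) : ℝ := P00 z + P11 z

lemma Tz_eq (z : Fin 4 → ℂ) :
    Tz z = 2 * ∑ j, normSq (z j) := by
  simp only [Tz, P00, P11, Az, Bz, Cz, Dz, normSq_apply, add_re, add_im, sub_re, sub_im,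
    mul_re, mul_im, I_re, I_im, Fin.sum_univ_four]
  ring

lemma Tz_pos {z : Fin 4 → ℂ} (hz : z ≠ 0) : 0 < Tz z := by
  rw [Tz_eq]
  have : ∃ j, z j ≠ 0 := by
    by_contra h
    push_neg at h
    exact hz (funext fun j => h j)
  obtain ⟨j, hj⟩ := this
  have hs : 0 < ∑ j, normSq (z j) :=
    Finset.sum_pos' (fun i _ => normSq_nonneg _) ⟨j, Finset.mem_univ j, normSq_pos.2 hj⟩
  linarith

lemma sum_sq_eq (z : Fin 4 → ℂ) : (∑ j, z j ^ 2) = Az z * Dz z + Bz z * Cz z := by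
  simp only [Fin.sum_univ_four, Az, Bz, Cz, Dz]
  ring_nf
  simp [I_sq]

def uMap (z : Fin 4 → ℂ) : E3 :=
  WithLp.toLp 2 ![(P00 z - P11 z)/Tz z, 2*(P01 z).re/Tz z, 2*(P01 z).im/Tz z]
def vMap (z : Fin 4 → ℂ) : E3 :=
  WithLp.toLp 2 ![(Q00 z - Q11 z)/Tz z, 2*(Q01 z).re/Tz z, 2*(Q01 z).im/Tz z]

lemma norm_uMap {z : Fin 4 → ℂ} (hz : z ≠ 0) (hq : (∑ j, z j ^ 2) = 0) : ‖uMap z‖ = 1 := by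
  have hT := Tz_pos hz
  have hq' : Az z * Dz z + Bz z * Cz z = 0 := by rw [← sum_sq_eq]; exact hq
  have key : (P00 z - P11 z)^2 + (2*(P01 z).re)^2 + (2*(P01 z).im)^2 = Tz z ^ 2 := by
    have lag : P00 z * P11 z - normSq (P01 z) = normSq (Az z * Dz z + Bz z * Cz z) := by
      simp only [P00, P11, P01, normSq_apply, mul_re, mul_im, neg_re, neg_im, add_re, add_im,
        conj_re, conj_im, Az, Bz, Cz, Dz, sub_re, sub_im, I_re, I_im]
      ring
    rw [hq', normSq_zero] at lag
    simp only [normSq_apply] at lag ⊢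
    simp only [Tz]
    linear_combination (-4:ℝ) * lag
  rw [show (1:ℝ) = Real.sqrt 1 by simp]
  rw [EuclideanSpace.norm_eq]
  congr 1
  have : ∑ i, ‖uMap z i‖^2 = ((P00 z - P11 z)^2 + (2*(P01 z).re)^2 + (2*(P01 z).im)^2)/Tz z^2 := by
    simp only [Fin.sum_univ_three, uMap]
    simp only [PiLp.toLp_apply, Matrix.cons_val_zero, Matrix.cons_val_one, Matrix.head_cons,
      Matrix.cons_val_two, Matrix.tail_cons, Real.norm_eq_abs, _root_.sq_abs, div_pow]
    ring
  rw [this, key, div_self (by positivity)]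

lemma norm_vMap {z : Fin 4 → ℂ} (hz : z ≠ 0) (hq : (∑ j, z j ^ 2) = 0) : ‖vMap z‖ = 1 := by
  have hT := Tz_pos hz
  have hq' : Az z * Dz z + Bz z * Cz z = 0 := by rw [← sum_sq_eq]; exact hq
  have key : (Q00 z - Q11 z)^2 + (2*(Q01 z).re)^2 + (2*(Q01 z).im)^2 = Tz z ^ 2 := by
    have lag : Q00 z * Q11 z - normSq (Q01 z) = normSq (Az z * Dz z + Bz z * Cz z) := by
      simp only [Q00, Q11, Q01, normSq_apply, mul_re, mul_im, sub_re, sub_im, add_re, add_im,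
        conj_re, conj_im, Az, Bz, Cz, Dz, I_re, I_im]
      ring
    rw [hq', normSq_zero] at lag
    have hTQ : Tz z = Q00 z + Q11 z := by
      simp only [Tz, P00, P11, Q00, Q11]; ring
    rw [hTQ]
    simp only [normSq_apply] at lag ⊢
    linear_combination (-4:ℝ) * lag
  rw [show (1:ℝ) = Real.sqrt 1 by simp]
  rw [EuclideanSpace.norm_eq]
  congr 1
  have : ∑ i, ‖vMap z i‖^2 = ((Q00 z - Q11 z)^2 + (2*(Q01 z).re)^2 + (2*(Q01 z).im)^2)/Tz z^2 := by
    simp only [Fin.sum_univ_three, vMap]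
    simp only [PiLp.toLp_apply, Matrix.cons_val_zero, Matrix.cons_val_one, Matrix.head_cons,
      Matrix.cons_val_two, Matrix.tail_cons, Real.norm_eq_abs, _root_.sq_abs, div_pow]
    ring
  rw [this, key, div_self (by positivity)]

lemma Az_smul (c : ℂ) (z : Fin 4 → ℂ) : Az (c • z) = c * Az z := by
  simp only [Az, Pi.smul_apply, smul_eq_mul]; ring
lemma Bz_smul (c : ℂ) (z : Fin 4 → ℂ) : Bz (c • z) = c * Bz z := by
  simp only [Bz, Pi.smul_apply, smul_eq_mul]; ring
lemma Cz_smul (c : ℂ) (z : Fin 4 → ℂ) : Cz (c • z) = c * Cz z := by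
  simp only [Cz, Pi.smul_apply, smul_eq_mul]; ring
lemma Dz_smul (c : ℂ) (z : Fin 4 → ℂ) : Dz (c • z) = c * Dz z := by
  simp only [Dz, Pi.smul_apply, smul_eq_mul]; ring

lemma P00_smul (c : ℂ) (z : Fin 4 → ℂ) : P00 (c • z) = normSq c * P00 z := by
  simp only [P00, Az_smul, Bz_smul, normSq_mul]; ring
lemma P11_smul (c : ℂ) (z : Fin 4 → ℂ) : P11 (c • z) = normSq c * P11 z := by
  simp only [P11, Cz_smul, Dz_smul, normSq_mul]; ring
lemma Q00_smul (c : ℂ) (z : Fin 4 → ℂ) : Q00 (c • z) = normSq c * Q00 z := by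
  simp only [Q00, Az_smul, Cz_smul, normSq_mul]; ring
lemma Q11_smul (c : ℂ) (z : Fin 4 → ℂ) : Q11 (c • z) = normSq c * Q11 z := by
  simp only [Q11, Bz_smul, Dz_smul, normSq_mul]; ring
lemma Tz_smul (c : ℂ) (z : Fin 4 → ℂ) : Tz (c • z) = normSq c * Tz z := by
  simp only [Tz, P00_smul, P11_smul]; ring
lemma P01_smul (c : ℂ) (z : Fin 4 → ℂ) : P01 (c • z) = (normSq c : ℂ) * P01 z := by
  simp only [P01, Az_smul, Bz_smul, Cz_smul, Dz_smul, map_mul]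
  linear_combination (Bz z * (starRingEnd ℂ) (Dz z) - Az z * (starRingEnd ℂ) (Cz z)) * mul_conj c
lemma Q01_smul (c : ℂ) (z : Fin 4 → ℂ) : Q01 (c • z) = (normSq c : ℂ) * Q01 z := by
  simp only [Q01, Az_smul, Bz_smul, Cz_smul, Dz_smul, map_mul]
  linear_combination ((starRingEnd ℂ) (Az z) * Bz z - (starRingEnd ℂ) (Cz z) * Dz z) * mul_conj c

lemma uMap_smul {c : ℂ} (hc : c ≠ 0) {z : Fin 4 → ℂ} (hz : z ≠ 0) : uMap (c • z) = uMap z := by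
  have hk : normSq c ≠ 0 := (normSq_pos.2 hc).ne'
  have hT : Tz z ≠ 0 := (Tz_pos hz).ne'
  ext i
  fin_cases i <;>
    simp only [uMap, P00_smul, P11_smul, P01_smul, Tz_smul, re_ofReal_mul, im_ofReal_mul, PiLp.toLp_apply,
      Matrix.cons_val_zero, Matrix.cons_val_one, Matrix.head_cons, Matrix.cons_val_two,
      Matrix.tail_cons] <;>
    field_simp <;> ring

lemma vMap_smul {c : ℂ} (hc : c ≠ 0) {z : Fin 4 → ℂ} (hz : z ≠ 0) : vMap (c • z) = vMap z := by
  have hk : normSq c ≠ 0 := (normSq_pos.2 hc).ne'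
  have hT : Tz z ≠ 0 := (Tz_pos hz).ne'
  ext i
  fin_cases i <;>
    simp only [vMap, Q00_smul, Q11_smul, Q01_smul, Tz_smul, re_ofReal_mul, im_ofReal_mul, PiLp.toLp_apply,
      Matrix.cons_val_zero, Matrix.cons_val_one, Matrix.head_cons, Matrix.cons_val_two,
      Matrix.tail_cons] <;>
    field_simp <;> ring

abbrev P3 := Projectivization ℂ (Fin 4 → ℂ)

def Phi (v : {v : Fin 4 → ℂ // v ≠ 0}) : E3 × E3 := (uMap v.1, vMap v.1)

lemma Phi_scale : ∀ (a b : {v : Fin 4 → ℂ // v ≠ 0}) (t : ℂ), (a : Fin 4 → ℂ) = t • (b : Fin 4 → ℂ) → Phi a = Phi b := by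
  rintro ⟨a, ha⟩ ⟨b, hb⟩ t h
  have ht : t ≠ 0 := by
    rintro rfl
    simp at h
    exact ha h
  simp only [Phi]
  dsimp only at h
  rw [h, uMap_smul ht hb, vMap_smul ht hb]

def Gmap : P3 → E3 × E3 := Projectivization.lift Phi Phi_scale

lemma continuous_val_comp : Continuous (fun v : {v : Fin 4 → ℂ // v ≠ 0} => (v : Fin 4 → ℂ)) :=
  continuous_subtype_val

lemma continuous_Phi : Continuous Phi := by
  have hT0 : Continuous fun z : Fin 4 → ℂ => Tz z := by
    unfold Tz P00 P11 Az Bz Cz Dz; fun_prop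
  have c1 : Continuous fun z : Fin 4 → ℂ => P00 z - P11 z := by
    unfold P00 P11 Az Bz Cz Dz; fun_prop
  have c2 : Continuous fun z : Fin 4 → ℂ => 2*(P01 z).re := by
    unfold P01 Az Bz Cz Dz; fun_prop
  have c3 : Continuous fun z : Fin 4 → ℂ => 2*(P01 z).im := by
    unfold P01 Az Bz Cz Dz; fun_prop
  have c4 : Continuous fun z : Fin 4 → ℂ => Q00 z - Q11 z := by
    unfold Q00 Q11 Az Bz Cz Dz; fun_prop
  have c5 : Continuous fun z : Fin 4 → ℂ => 2*(Q01 z).re := by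
    unfold Q01 Az Bz Cz Dz; fun_prop
  have c6 : Continuous fun z : Fin 4 → ℂ => 2*(Q01 z).im := by
    unfold Q01 Az Bz Cz Dz; fun_prop
  have hTc : Continuous fun v : {v : Fin 4 → ℂ // v ≠ 0} => Tz v.1 :=
    hT0.comp continuous_subtype_val
  have hTne : ∀ v : {v : Fin 4 → ℂ // v ≠ 0}, Tz v.1 ≠ 0 := fun v => (Tz_pos v.2).ne'
  apply Continuous.prodMk
  · exact cont3 ((c1.comp continuous_subtype_val).div hTc hTne)
      ((c2.comp continuous_subtype_val).div hTc hTne)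
      ((c3.comp continuous_subtype_val).div hTc hTne)
  · exact cont3 ((c4.comp continuous_subtype_val).div hTc hTne)
      ((c5.comp continuous_subtype_val).div hTc hTne)
      ((c6.comp continuous_subtype_val).div hTc hTne)

lemma continuous_Gmap : Continuous Gmap := by
  apply Continuous.quotient_lift
  exact continuous_Phi

lemma sum_sq_smul (c : ℂ) (z : Fin 4 → ℂ) : (∑ j, (c • z) j ^ 2) = c^2 * ∑ j, z j ^ 2 := by
  simp only [Pi.smul_apply, smul_eq_mul, mul_pow, Finset.mul_sum]

def Kset : Set (Fin 4 → ℂ) := {z | (∑ j, z j ^ 2) = 0 ∧ ‖z‖ = 1}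

lemma isCompact_Kset : IsCompact Kset := by
  have h1 : IsClosed Kset := by
    have : Kset = {z : Fin 4 → ℂ | (∑ j, z j ^ 2) = 0} ∩ {z | ‖z‖ = 1} := rfl
    rw [this]
    exact (isClosed_eq (by fun_prop) continuous_const).inter
      (isClosed_eq continuous_norm continuous_const)
  have h2 : Kset ⊆ Metric.sphere 0 1 := fun z hz => by
    simpa [mem_sphere_iff_norm] using hz.2
  exact (isCompact_sphere (0 : Fin 4 → ℂ) 1).of_isClosed_subset h1 h2

lemma Kset_nonzero {z : Fin 4 → ℂ} (hz : z ∈ Kset) : z ≠ 0 := by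
  intro h
  rw [h] at hz
  simp [Kset] at hz

lemma rep_quad {z : Fin 4 → ℂ} (hz : z ≠ 0) (hq : (∑ j, z j ^ 2) = 0) :
    (∑ j, (Projectivization.mk ℂ z hz).rep j ^ 2) = 0 := by
  obtain ⟨a, ha⟩ := Projectivization.exists_smul_eq_mk_rep ℂ z hz
  rw [← ha]
  have : (a • z : Fin 4 → ℂ) = (a : ℂ) • z := rfl
  rw [this, sum_sq_smul, hq, mul_zero]

def qK (z : Kset) : Qtwo :=
  ⟨Projectivization.mk ℂ z.1 (Kset_nonzero z.2), rep_quad _ z.2.1⟩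

lemma continuous_qK : Continuous qK := by
  apply Continuous.subtype_mk
  have : (fun z : Kset => Projectivization.mk ℂ z.1 (Kset_nonzero z.2)) =
      (fun v : {v : Fin 4 → ℂ // v ≠ 0} => (Quotient.mk'' v : P3)) ∘
      (fun z : Kset => (⟨z.1, Kset_nonzero z.2⟩ : {v : Fin 4 → ℂ // v ≠ 0})) := rfl
  rw [this]
  exact Continuous.comp continuous_quotient_mk' (continuous_subtype_val.subtype_mk _)

lemma qK_surjective : Function.Surjective qK := by
  intro x
  set v := x.1.rep with hv
  have hvne : v ≠ 0 := x.1.rep_nonzero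
  have hnv : ‖v‖ ≠ 0 := norm_ne_zero_iff.2 hvne
  set c : ℂ := ((‖v‖⁻¹ : ℝ) : ℂ) with hc
  have hcne : c ≠ 0 := by
    simp [hc, hnv]
  refine ⟨⟨c • v, ?_, ?_⟩, ?_⟩
  · rw [sum_sq_smul, x.2, mul_zero]
  · rw [norm_smul]
    simp only [hc, Complex.norm_real, norm_inv, Real.norm_eq_abs,
      _root_.abs_of_nonneg (norm_nonneg v)]
    exact inv_mul_cancel₀ hnv
  · apply Subtype.ext
    show Projectivization.mk ℂ (c • v) _ = x.1
    conv_rhs => rw [show x.1 = Projectivization.mk ℂ v hvne from (Projectivization.mk_rep x.1).symm]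
    rw [Projectivization.mk_eq_mk_iff']
    exact ⟨c, rfl⟩

instance : CompactSpace Kset := isCompact_iff_compactSpace.1 isCompact_Kset

instance : CompactSpace Qtwo := by
  constructor
  have h : (Set.univ : Set Qtwo) = Set.range qK := by
    rw [Set.range_eq_univ.2 qK_surjective]
  rw [h]
  exact isCompact_range continuous_qK

def Fm (s0 s1 : ℂ) : E3 :=
  WithLp.toLp 2 ![(normSq s0 - normSq s1)/(normSq s0 + normSq s1),
    2*(s0 * (starRingEnd ℂ) s1).re/(normSq s0 + normSq s1),
    2*(s0 * (starRingEnd ℂ) s1).im/(normSq s0 + normSq s1)]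

def Gm (t0 t1 : ℂ) : E3 :=
  WithLp.toLp 2 ![(normSq t0 - normSq t1)/(normSq t0 + normSq t1),
    2*((starRingEnd ℂ) t0 * t1).re/(normSq t0 + normSq t1),
    2*((starRingEnd ℂ) t0 * t1).im/(normSq t0 + normSq t1)]

lemma Gm_eq_Fm (t0 t1 : ℂ) : Gm t0 t1 = Fm ((starRingEnd ℂ) t0) ((starRingEnd ℂ) t1) := by
  simp [Gm, Fm, normSq_conj, mul_comm]

lemma ns_pos {s0 s1 : ℂ} (hs : ¬(s0 = 0 ∧ s1 = 0)) : 0 < normSq s0 + normSq s1 := by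
  rcases Classical.em (s0 = 0) with h0 | h0
  · have h1 : s1 ≠ 0 := fun h => hs ⟨h0, h⟩
    have := normSq_pos.2 h1
    have := normSq_nonneg s0
    linarith
  · have := normSq_pos.2 h0
    have := normSq_nonneg s1
    linarith

lemma seg_vals {s0 s1 t0 t1 : ℂ} {z : Fin 4 → ℂ}
    (hA : Az z = s0*t0) (hB : Bz z = s0*t1) (hC : Cz z = -(s1*t0)) (hD : Dz z = s1*t1) :
    P00 z = normSq s0 * (normSq t0 + normSq t1) ∧
    P11 z = normSq s1 * (normSq t0 + normSq t1) ∧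
    P01 z = ((normSq t0 + normSq t1 : ℝ) : ℂ) * (s0 * (starRingEnd ℂ) s1) ∧
    Q00 z = normSq t0 * (normSq s0 + normSq s1) ∧
    Q11 z = normSq t1 * (normSq s0 + normSq s1) ∧
    Q01 z = ((normSq s0 + normSq s1 : ℝ) : ℂ) * ((starRingEnd ℂ) t0 * t1) := by
  refine ⟨?_, ?_, ?_, ?_, ?_, ?_⟩
  · simp only [P00, hA, hB, normSq_mul]; ring
  · simp only [P11, hC, hD, normSq_neg, normSq_mul]; ring
  · simp only [P01, hA, hB, hC, hD, map_mul, map_neg, ofReal_add]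
    linear_combination (s0 * (starRingEnd ℂ) s1) * mul_conj t0 +
      (s0 * (starRingEnd ℂ) s1) * mul_conj t1
  · simp only [Q00, hA, hC, normSq_neg, normSq_mul]; ring
  · simp only [Q11, hB, hD, normSq_mul]; ring
  · simp only [Q01, hA, hB, hC, hD, map_mul, map_neg, ofReal_add]
    linear_combination ((starRingEnd ℂ) t0 * t1) * mul_conj s0 +
      ((starRingEnd ℂ) t0 * t1) * mul_conj s1

lemma Tz_seg {s0 s1 t0 t1 : ℂ} {z : Fin 4 → ℂ}
    (hA : Az z = s0*t0) (hB : Bz z = s0*t1) (hC : Cz z = -(s1*t0)) (hD : Dz z = s1*t1) :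
    Tz z = (normSq s0 + normSq s1) * (normSq t0 + normSq t1) := by
  obtain ⟨h1, h2, -, -, -, -⟩ := seg_vals hA hB hC hD
  simp only [Tz, h1, h2]; ring

lemma uMap_seg {s0 s1 t0 t1 : ℂ} {z : Fin 4 → ℂ}
    (hs : ¬(s0 = 0 ∧ s1 = 0)) (ht : ¬(t0 = 0 ∧ t1 = 0))
    (hA : Az z = s0*t0) (hB : Bz z = s0*t1) (hC : Cz z = -(s1*t0)) (hD : Dz z = s1*t1) :
    uMap z = Fm s0 s1 ∧ vMap z = Gm t0 t1 := by
  obtain ⟨h1, h2, h3, h4, h5, h6⟩ := seg_vals hA hB hC hD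
  have hT := Tz_seg hA hB hC hD
  have hns := ns_pos hs
  have hnt := ns_pos ht
  constructor
  · ext i
    fin_cases i <;>
      simp only [uMap, Fm, h1, h2, h3, hT, re_ofReal_mul, im_ofReal_mul, PiLp.toLp_apply,
        Matrix.cons_val_zero, Matrix.cons_val_one, Matrix.head_cons,
        Matrix.cons_val_two, Matrix.tail_cons] <;>
      field_simp <;> ring
  · ext i
    fin_cases i <;>
      simp only [vMap, Gm, h4, h5, h6, hT, re_ofReal_mul, im_ofReal_mul, PiLp.toLp_apply,
        Matrix.cons_val_zero, Matrix.cons_val_one, Matrix.head_cons,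
        Matrix.cons_val_two, Matrix.tail_cons] <;>
      field_simp <;> ring

def zOf (s0 s1 t0 t1 : ℂ) : Fin 4 → ℂ :=
  ![(s0*t0 + s1*t1)/2, -I*(s0*t0 - s1*t1)/2, (s0*t1 + -(s1*t0))/2, -I*(s0*t1 - -(s1*t0))/2]

lemma zOf_vals (s0 s1 t0 t1 : ℂ) :
    Az (zOf s0 s1 t0 t1) = s0*t0 ∧ Bz (zOf s0 s1 t0 t1) = s0*t1 ∧
    Cz (zOf s0 s1 t0 t1) = -(s1*t0) ∧ Dz (zOf s0 s1 t0 t1) = s1*t1 := by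
  refine ⟨?_, ?_, ?_, ?_⟩ <;>
    simp only [Az, Bz, Cz, Dz, zOf, Matrix.cons_val_zero, Matrix.cons_val_one,
      Matrix.head_cons, Matrix.cons_val_two, Matrix.tail_cons, Matrix.cons_val_three] <;>
    (first | (ring_nf; simp only [I_sq]; ring) | (ring_nf; simp only [I_sq]) | ring_nf)

lemma recon (z : Fin 4 → ℂ) :
    z 0 = (Az z + Dz z)/2 ∧ z 1 = -I*(Az z - Dz z)/2 ∧
    z 2 = (Bz z + Cz z)/2 ∧ z 3 = -I*(Bz z - Cz z)/2 := by
  refine ⟨?_, ?_, ?_, ?_⟩ <;>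
    simp only [Az, Bz, Cz, Dz] <;>
    (first | (ring_nf; simp only [I_sq]; ring) | (ring_nf; simp only [I_sq]) | ring_nf)

lemma factor {a b c d : ℂ} (h : a*d + b*c = 0) (hne : ¬(a = 0 ∧ b = 0 ∧ c = 0 ∧ d = 0)) :
    ∃ s0 s1 t0 t1 : ℂ, ¬(s0 = 0 ∧ s1 = 0) ∧ ¬(t0 = 0 ∧ t1 = 0) ∧
      a = s0*t0 ∧ b = s0*t1 ∧ c = -(s1*t0) ∧ d = s1*t1 := by
  rcases Classical.em (a = 0) with ha | ha
  · rcases Classical.em (b = 0) with hb | hb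
    · rcases Classical.em (c = 0) with hc | hc
      · have hd : d ≠ 0 := fun hd => hne ⟨ha, hb, hc, hd⟩
        exact ⟨0, 1, 0, d, by simp, by simp [hd], by simp [ha], by simp [hb],
          by simp [hc], by simp⟩
      · exact ⟨0, 1, -c, d, by simp, fun hh => hc (by simpa using neg_eq_zero.1 hh.1), by simp [ha], by simp [hb],
          by simp, by simp⟩
    · have hc : c = 0 := by
        rw [ha] at h
        simpa [hb] using h
      exact ⟨1, d/b, 0, b, by simp, by simp [hb], by simp [ha], by simp,
        by simp [hc], by field_simp⟩
  · refine ⟨1, -c/a, a, b, by simp, by simp [ha], by simp, by simp, ?_, ?_⟩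
    · field_simp
    · field_simp
      linear_combination h

lemma Fm_inj {s0 s1 s0' s1' : ℂ} (hs : ¬(s0 = 0 ∧ s1 = 0)) (hs' : ¬(s0' = 0 ∧ s1' = 0))
    (h : Fm s0 s1 = Fm s0' s1') : ∃ l : ℂ, l ≠ 0 ∧ s0' = l * s0 ∧ s1' = l * s1 := by
  set n := normSq s0 + normSq s1 with hn
  set n' := normSq s0' + normSq s1' with hn'
  have hnp := ns_pos hs
  have hnp' := ns_pos hs'
  have h0 := congrFun (congrArg WithLp.ofLp h) 0
  have h1 := congrFun (congrArg WithLp.ofLp h) 1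
  have h2 := congrFun (congrArg WithLp.ofLp h) 2
  simp only [Fm, PiLp.toLp_apply, Matrix.cons_val_zero, Matrix.cons_val_one, Matrix.head_cons,
    Matrix.cons_val_two, Matrix.tail_cons] at h0 h1 h2
  rw [div_eq_div_iff hnp.ne' hnp'.ne'] at h0 h1 h2
  have E0 : normSq s0 * n' = normSq s0' * n := by
    simp only [hn, hn'] at h0 ⊢; linarith
  have E1 : normSq s1 * n' = normSq s1' * n := by
    simp only [hn, hn'] at h0 ⊢; linarith
  have Ec : (n' : ℂ) * (s0 * (starRingEnd ℂ) s1) = (n : ℂ) * (s0' * (starRingEnd ℂ) s1') := by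
    apply Complex.ext
    · rw [re_ofReal_mul, re_ofReal_mul]; simp only [hn, hn']; linarith
    · rw [im_ofReal_mul, im_ofReal_mul]; simp only [hn, hn']; linarith
  rcases Classical.em (s0 = 0) with h00 | h00
  · have hs1 : s1 ≠ 0 := fun hh => hs ⟨h00, hh⟩
    have h00' : s0' = 0 := by
      have : normSq s0' * n = 0 := by rw [← E0, h00]; simp
      rcases mul_eq_zero.1 this with hh | hh
      · exact normSq_eq_zero.1 hh
      · exact absurd hh hnp.ne'
    have hs1' : s1' ≠ 0 := by
      intro hh
      have : normSq s1 * n' = 0 := by rw [E1, hh]; simp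
      rcases mul_eq_zero.1 this with h3 | h3
      · exact hs1 (normSq_eq_zero.1 h3)
      · exact hnp'.ne' h3
    exact ⟨s1'/s1, div_ne_zero hs1' hs1, by rw [h00, h00', mul_zero], by field_simp⟩
  · have hs0' : s0' ≠ 0 := by
      intro hh
      have : normSq s0 * n' = 0 := by rw [E0, hh]; simp
      rcases mul_eq_zero.1 this with h3 | h3
      · exact h00 (normSq_eq_zero.1 h3)
      · exact hnp'.ne' h3
    refine ⟨s0'/s0, div_ne_zero hs0' h00, by field_simp, ?_⟩
    have H1 : (n' : ℂ) * ((starRingEnd ℂ) s0 * s1) = (n : ℂ) * ((starRingEnd ℂ) s0' * s1') := by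
      have := congrArg (starRingEnd ℂ) Ec
      simpa only [map_mul, conj_conj, Complex.conj_ofReal] using this
    have H2 : (n' : ℂ) * (s0 * (starRingEnd ℂ) s0) = (n : ℂ) * (s0' * (starRingEnd ℂ) s0') := by
      rw [mul_conj, mul_conj, ← ofReal_mul, ← ofReal_mul]
      exact_mod_cast (by linarith : n' * normSq s0 = n * normSq s0')
    have key : (s1' * s0 - s0' * s1) * ((starRingEnd ℂ) s0 * (n' : ℂ)) = 0 := by
      linear_combination s1' * H2 - s0' * H1
    have hcs0 : (starRingEnd ℂ) s0 ≠ 0 := by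
      simpa using h00
    have hnc : (n' : ℂ) ≠ 0 := by
      exact_mod_cast hnp'.ne'
    rcases mul_eq_zero.1 key with hh | hh
    · field_simp
      linear_combination hh
    · exact absurd hh (mul_ne_zero hcs0 hnc)

lemma Gm_inj {t0 t1 t0' t1' : ℂ} (ht : ¬(t0 = 0 ∧ t1 = 0)) (ht' : ¬(t0' = 0 ∧ t1' = 0))
    (h : Gm t0 t1 = Gm t0' t1') : ∃ m : ℂ, m ≠ 0 ∧ t0' = m * t0 ∧ t1' = m * t1 := by
  rw [Gm_eq_Fm, Gm_eq_Fm] at h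
  obtain ⟨l, hl, h0, h1⟩ := Fm_inj (by simpa using ht) (by simpa using ht') h
  refine ⟨(starRingEnd ℂ) l, by simpa using hl, ?_, ?_⟩
  · have := congrArg (starRingEnd ℂ) h0
    simpa [map_mul, conj_conj] using this
  · have := congrArg (starRingEnd ℂ) h1
    simpa [map_mul, conj_conj] using this

lemma Fm_surj (p : E3) (hp : ‖p‖ = 1) : ∃ s0 s1 : ℂ, ¬(s0 = 0 ∧ s1 = 0) ∧ Fm s0 s1 = p := by
  have hsum : p 0 ^2 + p 1 ^2 + p 2 ^2 = 1 := (normE3 p).1 hp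
  rcases Classical.em (p 0 = -1) with hp0 | hp0
  · have hp1 : p 1 = 0 := by nlinarith
    have hp2 : p 2 = 0 := by nlinarith
    refine ⟨0, 1, by simp, ?_⟩
    ext i
    fin_cases i
    · show (normSq 0 - normSq 1)/(normSq 0 + normSq 1) = p 0
      simp [hp0]
    · show 2*((0:ℂ) * (starRingEnd ℂ) 1).re/(normSq 0 + normSq 1) = p 1
      simp [hp1]
    · show 2*((0:ℂ) * (starRingEnd ℂ) 1).im/(normSq 0 + normSq 1) = p 2
      simp [hp2]
  · have h1p : (0:ℝ) < 1 + p 0 := by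
      refine lt_of_le_of_ne (by nlinarith) ?_
      intro hh
      exact hp0 (by linarith)
    set s0 : ℂ := ((1 + p 0 : ℝ) : ℂ) with hs0
    set s1 : ℂ := ((p 1 : ℝ) : ℂ) - ((p 2 : ℝ) : ℂ) * I with hs1
    have hns0 : normSq s0 = (1 + p 0)^2 := by
      simp [hs0, normSq_apply]; ring
    have hns1 : normSq s1 = p 1^2 + p 2^2 := by
      simp [hs1, normSq_apply]; ring
    have hre : (s0 * (starRingEnd ℂ) s1).re = (1 + p 0) * p 1 := by
      simp [hs0, hs1, mul_re, map_sub, map_mul, conj_ofReal, conj_I]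
    have him : (s0 * (starRingEnd ℂ) s1).im = (1 + p 0) * p 2 := by
      simp [hs0, hs1, mul_im, map_sub, map_mul, conj_ofReal, conj_I]
    have hden : (1 + p 0)^2 + (p 1^2 + p 2^2) = 2*(1 + p 0) := by nlinarith
    have hdne : 2*(1 + p 0) ≠ 0 := by linarith
    refine ⟨s0, s1, fun hh => by
      have := hh.1
      rw [hs0, ofReal_eq_zero] at this
      linarith, ?_⟩
    ext i
    fin_cases i
    · show (normSq s0 - normSq s1)/(normSq s0 + normSq s1) = p 0
      rw [hns0, hns1, hden, div_eq_iff hdne]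
      linear_combination -hsum
    · show 2*(s0 * (starRingEnd ℂ) s1).re/(normSq s0 + normSq s1) = p 1
      rw [hre, hns0, hns1, hden, div_eq_iff hdne]
      ring
    · show 2*(s0 * (starRingEnd ℂ) s1).im/(normSq s0 + normSq s1) = p 2
      rw [him, hns0, hns1, hden, div_eq_iff hdne]
      ring

lemma Gm_surj (p : E3) (hp : ‖p‖ = 1) : ∃ t0 t1 : ℂ, ¬(t0 = 0 ∧ t1 = 0) ∧ Gm t0 t1 = p := by
  obtain ⟨s0, s1, hs, hF⟩ := Fm_surj p hp
  refine ⟨(starRingEnd ℂ) s0, (starRingEnd ℂ) s1, by simpa using hs, ?_⟩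
  rw [Gm_eq_Fm]
  simpa [conj_conj] using hF

lemma z_ne_zero_of_ABCD {z : Fin 4 → ℂ} (h : ¬(Az z = 0 ∧ Bz z = 0 ∧ Cz z = 0 ∧ Dz z = 0)) :
    z ≠ 0 := by
  intro hz
  apply h
  rw [hz]
  refine ⟨?_, ?_, ?_, ?_⟩ <;> simp [Az, Bz, Cz, Dz]

lemma ABCD_ne_zero {z : Fin 4 → ℂ} (hz : z ≠ 0) :
    ¬(Az z = 0 ∧ Bz z = 0 ∧ Cz z = 0 ∧ Dz z = 0) := by
  rintro ⟨hA, hB, hC, hD⟩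
  apply hz
  obtain ⟨h0, h1, h2, h3⟩ := recon z
  funext i
  fin_cases i
  · show z 0 = 0; rw [h0, hA, hD]; simp
  · show z 1 = 0; rw [h1, hA, hD]; simp
  · show z 2 = 0; rw [h2, hB, hC]; simp
  · show z 3 = 0; rw [h3, hB, hC]; simp

lemma smul_of_ABCD {z w : Fin 4 → ℂ} (k : ℂ) (hA : Az w = k * Az z) (hB : Bz w = k * Bz z)
    (hC : Cz w = k * Cz z) (hD : Dz w = k * Dz z) : w = k • z := by
  obtain ⟨h0, h1, h2, h3⟩ := recon w
  obtain ⟨g0, g1, g2, g3⟩ := recon z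
  funext i
  fin_cases i
  · show w 0 = k * z 0; rw [h0, g0, hA, hD]; ring
  · show w 1 = k * z 1; rw [h1, g1, hA, hD]; ring
  · show w 2 = k * z 2; rw [h2, g2, hB, hC]; ring
  · show w 3 = k * z 3; rw [h3, g3, hB, hC]; ring

lemma quad_ABCD {z : Fin 4 → ℂ} (hq : (∑ j, z j ^ 2) = 0) :
    Az z * Dz z + Bz z * Cz z = 0 := by
  rw [← sum_sq_eq]; exact hq

lemma uv_inj {z w : Fin 4 → ℂ} (hz : z ≠ 0) (hw : w ≠ 0)
    (hqz : (∑ j, z j ^ 2) = 0) (hqw : (∑ j, w j ^ 2) = 0)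
    (hu : uMap z = uMap w) (hv : vMap z = vMap w) :
    ∃ k : ℂ, k ≠ 0 ∧ w = k • z := by
  obtain ⟨s0, s1, t0, t1, hs, ht, hA, hB, hC, hD⟩ :=
    factor (quad_ABCD hqz) (ABCD_ne_zero hz)
  obtain ⟨s0', s1', t0', t1', hs', ht', hA', hB', hC', hD'⟩ :=
    factor (quad_ABCD hqw) (ABCD_ne_zero hw)
  obtain ⟨huz, hvz⟩ := uMap_seg hs ht hA hB hC hD
  obtain ⟨huw, hvw⟩ := uMap_seg hs' ht' hA' hB' hC' hD'
  have hF : Fm s0 s1 = Fm s0' s1' := by rw [← huz, ← huw, hu]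
  have hG : Gm t0 t1 = Gm t0' t1' := by rw [← hvz, ← hvw, hv]
  obtain ⟨l, hl, hl0, hl1⟩ := Fm_inj hs hs' hF
  obtain ⟨m, hm, hm0, hm1⟩ := Gm_inj ht ht' hG
  refine ⟨l * m, mul_ne_zero hl hm, ?_⟩
  apply smul_of_ABCD
  · rw [hA', hA, hl0, hm0]; ring
  · rw [hB', hB, hl0, hm1]; ring
  · rw [hC', hC, hl1, hm0]; ring
  · rw [hD', hD, hl1, hm1]; ring

lemma uv_surj (p q : E3) (hp : ‖p‖ = 1) (hq : ‖q‖ = 1) :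
    ∃ z : Fin 4 → ℂ, z ≠ 0 ∧ (∑ j, z j ^ 2) = 0 ∧ uMap z = p ∧ vMap z = q := by
  obtain ⟨s0, s1, hs, hF⟩ := Fm_surj p hp
  obtain ⟨t0, t1, ht, hG⟩ := Gm_surj q hq
  set z := zOf s0 s1 t0 t1 with hzdef
  obtain ⟨hA, hB, hC, hD⟩ := zOf_vals s0 s1 t0 t1
  have hzne : z ≠ 0 := by
    apply z_ne_zero_of_ABCD
    rintro ⟨h1, h2, h3, h4⟩
    rw [hA] at h1; rw [hB] at h2; rw [hC] at h3; rw [hD] at h4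
    rcases Classical.em (s0 = 0) with h | h
    · have hs1 : s1 ≠ 0 := fun hh => hs ⟨h, hh⟩
      have ht0 : t0 = 0 := by
        have := neg_eq_zero.1 h3
        rcases mul_eq_zero.1 this with hh | hh
        · exact absurd hh hs1
        · exact hh
      have ht1 : t1 = 0 := by
        rcases mul_eq_zero.1 h4 with hh | hh
        · exact absurd hh hs1
        · exact hh
      exact ht ⟨ht0, ht1⟩
    · have ht0 : t0 = 0 := by
        rcases mul_eq_zero.1 h1 with hh | hh
        · exact absurd hh h
        · exact hh
      have ht1 : t1 = 0 := by
        rcases mul_eq_zero.1 h2 with hh | hh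
        · exact absurd hh h
        · exact hh
      exact ht ⟨ht0, ht1⟩
  have hquad : (∑ j, z j ^ 2) = 0 := by
    rw [sum_sq_eq, hA, hB, hC, hD]; ring
  obtain ⟨hu, hv⟩ := uMap_seg hs ht hA hB hC hD
  exact ⟨z, hzne, hquad, by rw [hu, hF], by rw [hv, hG]⟩

lemma Gmap_mk {z : Fin 4 → ℂ} (hz : z ≠ 0) :
    Gmap (Projectivization.mk ℂ z hz) = (uMap z, vMap z) := rfl

lemma Gmap_rep (x : P3) : Gmap x = (uMap x.rep, vMap x.rep) := by
  conv_lhs => rw [← Projectivization.mk_rep x]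
  exact Gmap_mk _

def hFun (x : Qtwo) : TwoSphere × TwoSphere :=
  (⟨(Gmap x.1).1, by
      rw [mem_sphere_zero_iff_norm, Gmap_rep]
      exact norm_uMap x.1.rep_nonzero x.2⟩,
   ⟨(Gmap x.1).2, by
      rw [mem_sphere_zero_iff_norm, Gmap_rep]
      exact norm_vMap x.1.rep_nonzero x.2⟩)

lemma hFun_injective : Function.Injective hFun := by
  intro x y hxy
  have h1 : (Gmap x.1).1 = (Gmap y.1).1 := congrArg (fun p => (p.1 : E3)) hxy
  have h2 : (Gmap x.1).2 = (Gmap y.1).2 := congrArg (fun p => (p.2 : E3)) hxy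
  rw [Gmap_rep, Gmap_rep] at h1 h2
  obtain ⟨k, hk, hkw⟩ := uv_inj x.1.rep_nonzero y.1.rep_nonzero x.2 y.2 h1 h2
  apply Subtype.ext
  rw [← Projectivization.mk_rep x.1, ← Projectivization.mk_rep y.1]
  symm
  rw [Projectivization.mk_eq_mk_iff']
  exact ⟨k, hkw.symm⟩

lemma hFun_surjective : Function.Surjective hFun := by
  rintro ⟨⟨p, hp⟩, ⟨q, hq⟩⟩
  rw [mem_sphere_zero_iff_norm] at hp hq
  obtain ⟨z, hz, hquad, hu, hv⟩ := uv_surj p q hp hq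
  refine ⟨⟨Projectivization.mk ℂ z hz, rep_quad hz hquad⟩, ?_⟩
  apply Prod.ext <;> apply Subtype.ext
  · show (Gmap (Projectivization.mk ℂ z hz)).1 = p
    rw [Gmap_mk]; exact hu
  · show (Gmap (Projectivization.mk ℂ z hz)).2 = q
    rw [Gmap_mk]; exact hv

noncomputable def hEquiv : Qtwo ≃ TwoSphere × TwoSphere :=
  Equiv.ofBijective hFun ⟨hFun_injective, hFun_surjective⟩

lemma continuous_hFun : Continuous hFun := by
  have hG : Continuous fun x : Qtwo => Gmap x.1 :=
    continuous_Gmap.comp continuous_subtype_val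
  exact ((hG.fst).subtype_mk _).prodMk ((hG.snd).subtype_mk _)

noncomputable def hHomeo : Qtwo ≃ₜ TwoSphere × TwoSphere :=
  Continuous.homeoOfEquivCompactToT2 (f := hEquiv) continuous_hFun

def eE3 : E3 := WithLp.toLp 2 ![1, 0, 0]

lemma norm_eE3 : ‖eE3‖ = 1 := by
  rw [normE3]
  show (1:ℝ)^2 + 0^2 + 0^2 = 1
  norm_num

lemma sq01_eq (z : Fin 4 → ℂ) : z 0 ^ 2 + z 1 ^ 2 = Az z * Dz z := by
  simp only [Az, Dz]
  linear_combination (z 1 ^ 2) * I_sq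

lemma uMap_eq_e {z : Fin 4 → ℂ} (hz : z ≠ 0) (hC : Cz z = 0) (hD : Dz z = 0) :
    uMap z = eE3 := by
  have hP11 : P11 z = 0 := by simp [P11, hC, hD]
  have hP01 : P01 z = 0 := by simp [P01, hC, hD]
  have hT : Tz z ≠ 0 := (Tz_pos hz).ne'
  have hTP : Tz z = P00 z := by simp [Tz, hP11]
  ext i
  fin_cases i
  · show (P00 z - P11 z)/Tz z = 1
    rw [hP11, hTP, sub_zero, div_self (hTP ▸ hT)]
  · show 2*(P01 z).re/Tz z = 0
    rw [hP01]; simp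
  · show 2*(P01 z).im/Tz z = 0
    rw [hP01]; simp

lemma uMap_eq_neg_e {z : Fin 4 → ℂ} (hz : z ≠ 0) (hA : Az z = 0) (hB : Bz z = 0) :
    uMap z = -eE3 := by
  have hP00 : P00 z = 0 := by simp [P00, hA, hB]
  have hP01 : P01 z = 0 := by simp [P01, hA, hB]
  have hT : Tz z ≠ 0 := (Tz_pos hz).ne'
  have hTP : Tz z = P11 z := by simp [Tz, hP00]
  ext i
  fin_cases i
  · show (P00 z - P11 z)/Tz z = -1
    rw [hP00, hTP, zero_sub, neg_div, div_self (hTP ▸ hT)]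
  · show 2*(P01 z).re/Tz z = -0
    rw [hP01]; simp
  · show 2*(P01 z).im/Tz z = -0
    rw [hP01]; simp

lemma vMap_eq_e {z : Fin 4 → ℂ} (hz : z ≠ 0) (hB : Bz z = 0) (hD : Dz z = 0) :
    vMap z = eE3 := by
  have hQ11 : Q11 z = 0 := by simp [Q11, hB, hD]
  have hQ01 : Q01 z = 0 := by simp [Q01, hB, hD]
  have hT : Tz z ≠ 0 := (Tz_pos hz).ne'
  have hTQ : Tz z = Q00 z := by
    have : Tz z = Q00 z + Q11 z := by simp only [Tz, P00, P11, Q00, Q11]; ring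
    rw [this, hQ11, add_zero]
  ext i
  fin_cases i
  · show (Q00 z - Q11 z)/Tz z = 1
    rw [hQ11, hTQ, sub_zero, div_self (hTQ ▸ hT)]
  · show 2*(Q01 z).re/Tz z = 0
    rw [hQ01]; simp
  · show 2*(Q01 z).im/Tz z = 0
    rw [hQ01]; simp

lemma vMap_eq_neg_e {z : Fin 4 → ℂ} (hz : z ≠ 0) (hA : Az z = 0) (hC : Cz z = 0) :
    vMap z = -eE3 := by
  have hQ00 : Q00 z = 0 := by simp [Q00, hA, hC]
  have hQ01 : Q01 z = 0 := by simp [Q01, hA, hC]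
  have hT : Tz z ≠ 0 := (Tz_pos hz).ne'
  have hTQ : Tz z = Q11 z := by
    have : Tz z = Q00 z + Q11 z := by simp only [Tz, P00, P11, Q00, Q11]; ring
    rw [this, hQ00, zero_add]
  ext i
  fin_cases i
  · show (Q00 z - Q11 z)/Tz z = -1
    rw [hQ00, hTQ, zero_sub, neg_div, div_self (hTQ ▸ hT)]
  · show 2*(Q01 z).re/Tz z = -0
    rw [hQ01]; simp
  · show 2*(Q01 z).im/Tz z = -0
    rw [hQ01]; simp

lemma normSq_add_eq_zero {x y : ℂ} (h : normSq x + normSq y = 0) : x = 0 ∧ y = 0 := by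
  have h1 := normSq_nonneg x
  have h2 := normSq_nonneg y
  constructor
  · exact normSq_eq_zero.1 (by linarith)
  · exact normSq_eq_zero.1 (by linarith)

lemma cond_iff {z : Fin 4 → ℂ} (hz : z ≠ 0) (hq : (∑ j, z j ^ 2) = 0) :
    z 0 ^ 2 + z 1 ^ 2 = 0 ↔
      (uMap z = eE3 ∨ uMap z = -eE3) ∨ (vMap z = eE3 ∨ vMap z = -eE3) := by
  have hT := (Tz_pos hz).ne'
  have hAD := quad_ABCD hq
  constructor
  · intro h
    rw [sq01_eq] at h
    have hBC : Bz z * Cz z = 0 := by linear_combination hAD - h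
    rcases mul_eq_zero.1 h with hA | hD
    · rcases mul_eq_zero.1 hBC with hB | hC
      · exact Or.inl (Or.inr (uMap_eq_neg_e hz hA hB))
      · exact Or.inr (Or.inr (vMap_eq_neg_e hz hA hC))
    · rcases mul_eq_zero.1 hBC with hB | hC
      · exact Or.inr (Or.inl (vMap_eq_e hz hB hD))
      · exact Or.inl (Or.inl (uMap_eq_e hz hC hD))
  · intro h
    rw [sq01_eq]
    rcases h with (h | h) | (h | h)
    · have h0 := congrFun (congrArg WithLp.ofLp h) 0
      have h1 : (P00 z - P11 z)/Tz z = 1 := h0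
      rw [div_eq_one_iff_eq hT] at h1
      have hP11 : P11 z = 0 := by simp only [Tz] at h1; linarith
      obtain ⟨-, hD⟩ := normSq_add_eq_zero hP11
      rw [hD, mul_zero]
    · have h0 := congrFun (congrArg WithLp.ofLp h) 0
      have h1 : (P00 z - P11 z)/Tz z = -1 := h0
      rw [div_eq_iff hT] at h1
      have hP00 : P00 z = 0 := by simp only [Tz] at h1; linarith
      obtain ⟨hA, -⟩ := normSq_add_eq_zero hP00
      rw [hA, zero_mul]
    · have h0 := congrFun (congrArg WithLp.ofLp h) 0
      have h1 : (Q00 z - Q11 z)/Tz z = 1 := h0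
      rw [div_eq_one_iff_eq hT] at h1
      have hTQ : Tz z = Q00 z + Q11 z := by simp only [Tz, P00, P11, Q00, Q11]; ring
      have hQ11 : Q11 z = 0 := by rw [hTQ] at h1; linarith
      obtain ⟨-, hD⟩ := normSq_add_eq_zero hQ11
      rw [hD, mul_zero]
    · have h0 := congrFun (congrArg WithLp.ofLp h) 0
      have h1 : (Q00 z - Q11 z)/Tz z = -1 := h0
      rw [div_eq_iff hT] at h1
      have hTQ : Tz z = Q00 z + Q11 z := by simp only [Tz, P00, P11, Q00, Q11]; ring
      have hQ00 : Q00 z = 0 := by rw [hTQ] at h1; linarith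
      obtain ⟨hA, -⟩ := normSq_add_eq_zero hQ00
      rw [hA, zero_mul]

lemma hHomeo_apply (x : Qtwo) : hHomeo x = hFun x := rfl

lemma mem_iff (x : Qtwo) :
    x.1.rep 0 ^ 2 + x.1.rep 1 ^ 2 = 0 ↔
      (((hHomeo x).1 : E3) = eE3 ∨ ((hHomeo x).1 : E3) = -eE3) ∨
      (((hHomeo x).2 : E3) = eE3 ∨ ((hHomeo x).2 : E3) = -eE3) := by
  have h1 : ((hHomeo x).1 : E3) = uMap x.1.rep := by
    rw [hHomeo_apply]
    show (Gmap x.1).1 = _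
    rw [Gmap_rep]
  have h2 : ((hHomeo x).2 : E3) = vMap x.1.rep := by
    rw [hHomeo_apply]
    show (Gmap x.1).2 = _
    rw [Gmap_rep]
  rw [h1, h2]
  exact cond_iff x.1.rep_nonzero x.2

theorem stmt_6' :
    ∃ (a b : EuclideanSpace ℝ (Fin 3)), ‖a‖ = 1 ∧ ‖b‖ = 1 ∧
    ∃ h : Qtwo ≃ₜ TwoSphere × TwoSphere,
      (h '' {x : Qtwo | x.1.rep 0 ^ 2 + x.1.rep 1 ^ 2 = 0} =
        ({p : TwoSphere | (p : EuclideanSpace ℝ (Fin 3)) = a ∨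
            (p : EuclideanSpace ℝ (Fin 3)) = -a} ×ˢ (Set.univ : Set TwoSphere)) ∪
        ((Set.univ : Set TwoSphere) ×ˢ {q : TwoSphere |
            (q : EuclideanSpace ℝ (Fin 3)) = b ∨
            (q : EuclideanSpace ℝ (Fin 3)) = -b})) ∧
      Nonempty
        (({x : Projectivization ℂ (Fin 4 → ℂ) //
            (∑ j, x.rep j ^ 2) = 0 ∧ x.rep 0 ^ 2 + x.rep 1 ^ 2 ≠ 0}) ≃ₜ
          ({p : TwoSphere // (p : EuclideanSpace ℝ (Fin 3)) ≠ a ∧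
              (p : EuclideanSpace ℝ (Fin 3)) ≠ -a} ×
           {q : TwoSphere // (q : EuclideanSpace ℝ (Fin 3)) ≠ b ∧
              (q : EuclideanSpace ℝ (Fin 3)) ≠ -b})) := by
  refine ⟨eE3, eE3, norm_eE3, norm_eE3, hHomeo, ?_, ?_⟩
  · ext y
    simp only [Set.mem_image, Set.mem_union, Set.mem_prod, Set.mem_univ, and_true, true_and,
      Set.mem_setOf_eq]
    constructor
    · rintro ⟨x, hx, rfl⟩
      exact (mem_iff x).1 hx
    · intro hy
      refine ⟨hHomeo.symm y, (mem_iff _).2 ?_, hHomeo.apply_symm_apply y⟩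
      rw [hHomeo.apply_symm_apply]
      exact hy
  · -- build the homeomorphism of complements
    refine ⟨?_⟩
    have e1 : ({x : Projectivization ℂ (Fin 4 → ℂ) //
        (∑ j, x.rep j ^ 2) = 0 ∧ x.rep 0 ^ 2 + x.rep 1 ^ 2 ≠ 0}) ≃ₜ
        {y : Qtwo // y.1.rep 0 ^ 2 + y.1.rep 1 ^ 2 ≠ 0} :=
      { toFun := fun x => ⟨⟨x.1, x.2.1⟩, x.2.2⟩
        invFun := fun y => ⟨y.1.1, y.1.2, y.2⟩
        left_inv := fun _ => rfl
        right_inv := fun _ => rfl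
        continuous_toFun := ((continuous_subtype_val.subtype_mk _).subtype_mk _)
        continuous_invFun :=
          (continuous_subtype_val.comp continuous_subtype_val).subtype_mk _ }
    have e2 : {y : Qtwo // y.1.rep 0 ^ 2 + y.1.rep 1 ^ 2 ≠ 0} ≃ₜ
        {pq : TwoSphere × TwoSphere //
          ((pq.1 : E3) ≠ eE3 ∧ (pq.1 : E3) ≠ -eE3) ∧
          ((pq.2 : E3) ≠ eE3 ∧ (pq.2 : E3) ≠ -eE3)} := by
      apply hHomeo.subtype
      intro x
      rw [← not_iff_not]
      push_neg
      rw [mem_iff x]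
      tauto
    have e3 : {pq : TwoSphere × TwoSphere //
          ((pq.1 : E3) ≠ eE3 ∧ (pq.1 : E3) ≠ -eE3) ∧
          ((pq.2 : E3) ≠ eE3 ∧ (pq.2 : E3) ≠ -eE3)} ≃ₜ
        ({p : TwoSphere // (p : E3) ≠ eE3 ∧ (p : E3) ≠ -eE3} ×
         {q : TwoSphere // (q : E3) ≠ eE3 ∧ (q : E3) ≠ -eE3}) :=
      { toFun := fun pq => (⟨pq.1.1, pq.2.1⟩, ⟨pq.1.2, pq.2.2⟩)
        invFun := fun ab => ⟨(ab.1.1, ab.2.1), ab.1.2, ab.2.2⟩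
        left_inv := fun _ => rfl
        right_inv := fun _ => rfl
        continuous_toFun :=
          ((continuous_subtype_val.fst).subtype_mk _).prodMk
            ((continuous_subtype_val.snd).subtype_mk _)
        continuous_invFun :=
          ((continuous_subtype_val.comp continuous_fst).prodMk
            (continuous_subtype_val.comp continuous_snd)).subtype_mk _ }
    exact (e1.trans e2).trans e3

end

/-- There are points `a, b ∈ S²` and a homeomorphism
`h : Q₂ → S² × S²` carrying `Q₂ ∩ (H ∪ H') = {[z] ∈ Q₂ : z₁² + z₂² = 0}` onto
`({a, -a} × S²) ∪ (S² × {b, -b})`; consequently `Q₂ ∖ (H ∪ H')` is homeomorphic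
to `(S² ∖ {a, -a}) × (S² ∖ {b, -b})`. -/
theorem stmt_6 :
    ∃ (a b : EuclideanSpace ℝ (Fin 3)), ‖a‖ = 1 ∧ ‖b‖ = 1 ∧
    ∃ h : Qtwo ≃ₜ TwoSphere × TwoSphere,
      (h '' {x : Qtwo | x.1.rep 0 ^ 2 + x.1.rep 1 ^ 2 = 0} =
        ({p : TwoSphere | (p : EuclideanSpace ℝ (Fin 3)) = a ∨
            (p : EuclideanSpace ℝ (Fin 3)) = -a} ×ˢ (Set.univ : Set TwoSphere)) ∪
        ((Set.univ : Set TwoSphere) ×ˢ {q : TwoSphere |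
            (q : EuclideanSpace ℝ (Fin 3)) = b ∨
            (q : EuclideanSpace ℝ (Fin 3)) = -b})) ∧
      Nonempty
        (({x : Projectivization ℂ (Fin 4 → ℂ) //
            (∑ j, x.rep j ^ 2) = 0 ∧ x.rep 0 ^ 2 + x.rep 1 ^ 2 ≠ 0}) ≃ₜ
          ({p : TwoSphere // (p : EuclideanSpace ℝ (Fin 3)) ≠ a ∧
              (p : EuclideanSpace ℝ (Fin 3)) ≠ -a} ×
           {q : TwoSphere // (q : EuclideanSpace ℝ (Fin 3)) ≠ b ∧
              (q : EuclideanSpace ℝ (Fin 3)) ≠ -b})) := stmt_6'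
end
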